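/- arXiv:2102.05158 — 5 statements merged into one kernel-verified Lean document; each statement's English description precedes it below -/
import Mathlib

section
/- Let m, u, t, w be rational numbers with t ≠ 0 satisfying the Heron condition w² = 4m(mu²−m−2u)(mt²−2t−m)·((mu²−m−2u)t² + (2−4mu−2u²)t − mu² + m + 2u). Set n = m(m²+1)(2u−m(u²−1)) and x = ((2u−m(u²−1))/(4t²))·(−4(mu−1)(m+u)mt + 2(m²u²+m²−2mu+2)mt² + 2(2u−m(u²−1))m² + mw). Then there exists a rational number y with y² = x(x−n)(x−n(u²+1)); that is, x is the x-coordinate of a rational point on the angle-parametrized Heron curve E_{m,u}. -/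
/-- a rational solution of the Heron condition (for area parameter `m`
and angle parameter `u`) yields, via the change of variables for `x`, the
x-coordinate of a rational point on the angle-parametrized Heron curve
`E_{m,u} : y² = x(x−n)(x−n(u²+1))` with `n = m(m²+1)(2u−m(u²−1))`. -/
theorem heron_angle_to_curve (m u t w : ℚ) (ht : t ≠ 0)
    (hH : w ^ 2 = 4 * m * (m * u ^ 2 - m - 2 * u) * (m * t ^ 2 - 2 * t - m) *
      ((m * u ^ 2 - m - 2 * u) * t ^ 2 + (2 - 4 * m * u - 2 * u ^ 2) * t
        - m * u ^ 2 + m + 2 * u))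
    (n x : ℚ)
    (hn : n = m * (m ^ 2 + 1) * (2 * u - m * (u ^ 2 - 1)))
    (hx : x = (2 * u - m * (u ^ 2 - 1)) / (4 * t ^ 2) *
      (-4 * (m * u - 1) * (m + u) * m * t
        + 2 * (m ^ 2 * u ^ 2 + m ^ 2 - 2 * m * u + 2) * m * t ^ 2
        + 2 * (2 * u - m * (u ^ 2 - 1)) * m ^ 2 + m * w)) :
    ∃ y : ℚ, y ^ 2 = x * (x - n) * (x - n * (u ^ 2 + 1)) := by
  set q : ℚ := 2 * u - m * (u ^ 2 - 1) with hq
  set St : ℚ := -4 * (m * u - 1) * (m + u) * m * t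
        + 2 * (m ^ 2 * u ^ 2 + m ^ 2 - 2 * m * u + 2) * m * t ^ 2
        + 2 * (2 * u - m * (u ^ 2 - 1)) * m ^ 2 + m * w with hSt
  set C : ℚ := (4) * m^4 * u^4 * t^2 + (-4) * m^4 * u^4 + (4) * m^4 * u^3 * t^3 + (-12) * m^4 * u^3 * t + (-8) * m^4 * u^2 * t^2 + (8) * m^4 * u^2 + (-4) * m^4 * u * t^3 + (12) * m^4 * u * t + (4) * m^4 * t^2 + (-4) * m^4 + (4) * m^3 * u^4 * t^3 + (-12) * m^3 * u^4 * t + (-32) * m^3 * u^3 * t^2 + (16) * m^3 * u^3 + (-16) * m^3 * u^2 * t^3 + (48) * m^3 * u^2 * t + (32) * m^3 * u * t^2 + (-16) * m^3 * u + (4) * m^3 * t^3 + (-12) * m^3 * t + (-8) * m^2 * u^4 * t^2 + (-12) * m^2 * u^3 * t^3 + (36) * m^2 * u^3 * t + (64) * m^2 * u^2 * t^2 + (-16) * m^2 * u^2 + (12) * m^2 * u * t^3 + (-36) * m^2 * u * t + (-8) * m^2 * t^2 + (16) * m * u^3 * t^2 + (8) * m * u^2 * t^3 + (-24) * m * u^2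 * t + (-16) * m * u * t^2 with hC
  set D : ℚ := (2) * m^2 * u^2 + (2) * m^2 * u * t + (-2) * m^2 + (2) * m * u^2 * t + (-4) * m * u + (-2) * m * t + (-2) * u * t with hD
  refine ⟨m * q * (C + D * w) / (8 * t ^ 3), ?_⟩
  have key : (m * q * (C + D * w)) ^ 2
      = (q * St) * (q * St - 4 * t ^ 2 * n) * (q * St - 4 * t ^ 2 * n * (u ^ 2 + 1)) := by
    subst hn
    rw [hq, hSt, hC, hD]
    linear_combination ((m * (2 * u - m * (u ^ 2 - 1)) * ((2) * m^2 * u^2 + (2) * m^2 * u * t + (-2) * m^2 + (2) * m * u^2 * t + (-4) * m * u + (-2) * m * t + (-2) * u * t)) ^ 2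
      - ((2 * u - m * (u ^ 2 - 1)) * m) ^ 3 * (w
        + 3 * (-4 * (m * u - 1) * (m + u) * t
          + 2 * (m ^ 2 * u ^ 2 + m ^ 2 - 2 * m * u + 2) * t ^ 2
          + 2 * (2 * u - m * (u ^ 2 - 1)) * m)
        - 4 * t ^ 2 * (m ^ 2 + 1) - 4 * t ^ 2 * (m ^ 2 + 1) * (u ^ 2 + 1))) * hH
  have hx' : x = q * St / (4 * t ^ 2) := by rw [hx, hq, hSt]; ring
  rw [hx']
  have h4 : (4 : ℚ) * t ^ 2 ≠ 0 := by positivity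
  rw [div_pow, div_eq_iff (by positivity), key]
  field_simp
  ring
end

section
/- Let K = ℚ(m,u) be the fraction field of the polynomial ring in two indeterminates m, u over ℚ, and set N = m(m²+1)(2u−m(u²−1)). On the elliptic curve E over K given by y² = x(x−N)(x−N(u²+1)), the point P = ((m²+1)(m+u)², u²(m²+1)²(m+u)(mu−1)) is a K-rational point, and P has infinite order in the group of K-rational points: for every integer k ≥ 1, k•P is not the identity element O. -/
noncomputable section

/-- `K = ℚ(m, u)`, the fraction field of the polynomial ring in two variables over `ℚ`. -/
abbrev K2 : Type := FractionRing (MvPolynomial (Fin 2) ℚ)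

/-- The variable `m` in `K = ℚ(m, u)`. -/
def m2 : K2 := algebraMap (MvPolynomial (Fin 2) ℚ) K2 (MvPolynomial.X 0)

/-- The variable `u` in `K = ℚ(m, u)`. -/
def u2 : K2 := algebraMap (MvPolynomial (Fin 2) ℚ) K2 (MvPolynomial.X 1)

/-- `N = m(m²+1)(2u − m(u²−1))`. -/
def N2 : K2 := m2 * (m2 ^ 2 + 1) * (2 * u2 - m2 * (u2 ^ 2 - 1))

/-- The angle-parametrized Heron curve `E : y² = x(x−N)(x−N(u²+1))` over `ℚ(m, u)`. -/
def E2 : WeierstrassCurve.Affine K2 :=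
  { a₁ := 0
    a₂ := -(N2 + N2 * (u2 ^ 2 + 1))
    a₃ := 0
    a₄ := N2 * (N2 * (u2 ^ 2 + 1))
    a₆ := 0 }


namespace HeronAux

open Polynomial WeierstrassCurve.Affine WeierstrassCurve.Affine.Point



variable {F : Type} [Field F]

/-- Parity of the order of vanishing at `a` of an element of `FractionRing F[X]`. -/
def chi (a : F) (z : FractionRing (Polynomial F)) : ZMod 2 :=
  ((rootMultiplicity a (IsLocalization.sec (nonZeroDivisors (Polynomial F)) z).1 : ZMod 2) +
   (rootMultiplicity a ((IsLocalization.sec (nonZeroDivisors (Polynomial F)) z).2 : Polynomial F) : ZMod 2))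

lemma two_zmod2 : (2 : ZMod 2) = 0 := rfl

lemma chi_spec (a : F) (z : FractionRing (Polynomial F)) (p q : Polynomial F)
    (hp : p ≠ 0) (hq : q ≠ 0)
    (hz : z * algebraMap (Polynomial F) _ q = algebraMap (Polynomial F) _ p) :
    chi a z = (rootMultiplicity a p : ZMod 2) + (rootMultiplicity a q : ZMod 2) := by
  set p' := (IsLocalization.sec (nonZeroDivisors (Polynomial F)) z).1 with hp'
  set q' := (IsLocalization.sec (nonZeroDivisors (Polynomial F)) z).2 with hq'
  have hsec : z * algebraMap (Polynomial F) _ (q' : Polynomial F) = algebraMap (Polynomial F) _ p' :=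
    IsLocalization.sec_spec _ z
  have hq'0 : (q' : Polynomial F) ≠ 0 := nonZeroDivisors.coe_ne_zero q'
  have key : p * (q' : Polynomial F) = p' * q := by
    apply IsFractionRing.injective (Polynomial F) (FractionRing (Polynomial F))
    rw [map_mul, map_mul, ← hz, ← hsec]; ring
  have hp'0 : p' ≠ 0 := by
    intro h0
    apply hp
    have := key
    rw [h0, zero_mul] at this
    rcases mul_eq_zero.mp this with h | h
    · exact h
    · exact absurd h hq'0
  have hnat : rootMultiplicity a p + rootMultiplicity a (q' : Polynomial F)
      = rootMultiplicity a p' + rootMultiplicity a q := by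
    rw [← rootMultiplicity_mul (x := a) (mul_ne_zero hp hq'0),
        ← rootMultiplicity_mul (x := a) (mul_ne_zero hp'0 hq), key]
  have hcast : (rootMultiplicity a p : ZMod 2) + (rootMultiplicity a (q' : Polynomial F) : ZMod 2)
      = (rootMultiplicity a p' : ZMod 2) + (rootMultiplicity a q : ZMod 2) := by
    exact_mod_cast congrArg (Nat.cast : ℕ → ZMod 2) hnat
  rw [chi]
  linear_combination (-1 : ZMod 2) * hcast + ((rootMultiplicity a (q' : Polynomial F) : ZMod 2) - (rootMultiplicity a q : ZMod 2)) * two_zmod2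

lemma chi_algebraMap (a : F) (p : Polynomial F) (hp : p ≠ 0) :
    chi a (algebraMap (Polynomial F) (FractionRing (Polynomial F)) p) = (rootMultiplicity a p : ZMod 2) := by
  have h1 : rootMultiplicity a (1 : Polynomial F) = 0 :=
    rootMultiplicity_eq_zero (by simp [IsRoot])
  rw [chi_spec a _ p 1 hp one_ne_zero (by rw [map_one, mul_one]), h1]
  simp

lemma sec_ne_zero (z : FractionRing (Polynomial F)) (hz : z ≠ 0) :
    (IsLocalization.sec (nonZeroDivisors (Polynomial F)) z).1 ≠ 0 := by
  intro h0
  apply hz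
  have hsec := IsLocalization.sec_spec (nonZeroDivisors (Polynomial F)) z
  rw [h0, _root_.map_zero] at hsec
  rcases mul_eq_zero.mp hsec with h | h
  · exact h
  · exact absurd h (by
      simpa using (IsFractionRing.to_map_eq_zero_iff (K := FractionRing (Polynomial F))).not.mpr
        (nonZeroDivisors.coe_ne_zero (IsLocalization.sec (nonZeroDivisors (Polynomial F)) z).2))

lemma chi_mul (a : F) (z w : FractionRing (Polynomial F)) (hz : z ≠ 0) (hw : w ≠ 0) :
    chi a (z * w) = chi a z + chi a w := by
  set pz := (IsLocalization.sec (nonZeroDivisors (Polynomial F)) z).1 with hpz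
  set qz := (IsLocalization.sec (nonZeroDivisors (Polynomial F)) z).2 with hqz
  set pw := (IsLocalization.sec (nonZeroDivisors (Polynomial F)) w).1 with hpw
  set qw := (IsLocalization.sec (nonZeroDivisors (Polynomial F)) w).2 with hqw
  have hz' : z * algebraMap (Polynomial F) _ (qz : Polynomial F) = algebraMap (Polynomial F) _ pz :=
    IsLocalization.sec_spec _ z
  have hw' : w * algebraMap (Polynomial F) _ (qw : Polynomial F) = algebraMap (Polynomial F) _ pw :=
    IsLocalization.sec_spec _ w
  have hpz0 : pz ≠ 0 := sec_ne_zero z hz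
  have hpw0 : pw ≠ 0 := sec_ne_zero w hw
  have hqz0 : (qz : Polynomial F) ≠ 0 := nonZeroDivisors.coe_ne_zero qz
  have hqw0 : (qw : Polynomial F) ≠ 0 := nonZeroDivisors.coe_ne_zero qw
  have hmul : (z * w) * algebraMap (Polynomial F) _ ((qz : Polynomial F) * qw)
      = algebraMap (Polynomial F) _ (pz * pw) := by
    rw [map_mul, map_mul]
    calc z * w * ((algebraMap (Polynomial F) _ (qz : Polynomial F)) * algebraMap (Polynomial F) _ (qw : Polynomial F))
        = (z * algebraMap (Polynomial F) _ (qz : Polynomial F)) * (w * algebraMap (Polynomial F) _ (qw : Polynomial F)) := by ring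
      _ = _ := by rw [hz', hw']
  rw [chi_spec a (z * w) (pz * pw) ((qz : Polynomial F) * qw) (mul_ne_zero hpz0 hpw0)
      (mul_ne_zero hqz0 hqw0) hmul,
    chi_spec a z pz (qz : Polynomial F) hpz0 hqz0 hz',
    chi_spec a w pw (qw : Polynomial F) hpw0 hqw0 hw',
    rootMultiplicity_mul (mul_ne_zero hpz0 hpw0), rootMultiplicity_mul (mul_ne_zero hqz0 hqw0)]
  push_cast
  ring

lemma chi_sq (a : F) (z : FractionRing (Polynomial F)) (hz : z ≠ 0) : chi a (z ^ 2) = 0 := by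
  rw [sq, chi_mul a z z hz hz]
  have : ∀ x : ZMod 2, x + x = 0 := by decide
  exact this _



abbrev RR : Type := MvPolynomial (Fin 2) ℚ

variable (F₀ : Type) [Field F₀] [Algebra ℚ F₀]

/-- The base field `F₀(t)`. -/
abbrev FF : Type := FractionRing (Polynomial F₀)

/-- `t` as an element of `F₀(t)`. -/
def tt : FF F₀ := algebraMap (Polynomial F₀) (FF F₀) Polynomial.X

/-- `ℚ[u] → F₀(t)`, sending `u` to `t`  (here the one variable of `MvPolynomial (Fin 1) ℚ`). -/
def innerMap : MvPolynomial (Fin 1) ℚ →+* FF F₀ :=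
  ((algebraMap (Polynomial F₀) (FF F₀)).comp
    ((Polynomial.mapRingHom (algebraMap ℚ F₀)).comp
      ((Polynomial.mapRingHom (MvPolynomial.isEmptyRingEquiv ℚ (Fin 0)).toRingHom).comp
        (MvPolynomial.finSuccEquiv ℚ 0).toRingEquiv.toRingHom)))

lemma innerMap_injective : Function.Injective (innerMap F₀) := by
  apply Function.Injective.comp (IsFractionRing.injective (Polynomial F₀) (FF F₀))
  apply Function.Injective.comp (Polynomial.map_injective _ (algebraMap ℚ F₀).injective)
  apply Function.Injective.comp (Polynomial.map_injective _ (RingEquiv.injective _))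
  exact RingEquiv.injective _

lemma innerMap_X : innerMap F₀ (MvPolynomial.X 0) = tt F₀ := by
  simp [innerMap, tt, MvPolynomial.finSuccEquiv_X_zero]

/-- `ℚ[m,u] → F₀(t)[X]`, sending `m ↦ X`, `u ↦ C t`. -/
def psi : RR →+* Polynomial (FF F₀) :=
  (Polynomial.mapRingHom (innerMap F₀)).comp (MvPolynomial.finSuccEquiv ℚ 1).toRingEquiv.toRingHom

lemma psi_injective : Function.Injective (psi F₀) := by
  simp only [psi, RingHom.coe_comp, Polynomial.coe_mapRingHom]
  exact (Polynomial.map_injective _ (innerMap_injective F₀)).comp (RingEquiv.injective _)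

lemma psi_X0 : psi F₀ (MvPolynomial.X 0) = Polynomial.X := by
  simp [psi, MvPolynomial.finSuccEquiv_X_zero]

lemma psi_X1 : psi F₀ (MvPolynomial.X 1) = Polynomial.C (tt F₀) := by
  have h1 : (MvPolynomial.X (1 : Fin 2) : RR) = MvPolynomial.X (Fin.succ 0) := rfl
  rw [psi, RingHom.comp_apply, h1]
  rw [show ((MvPolynomial.finSuccEquiv ℚ 1).toRingEquiv.toRingHom (MvPolynomial.X (Fin.succ 0)))
      = Polynomial.C (MvPolynomial.X 0) from MvPolynomial.finSuccEquiv_X_succ]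
  rw [Polynomial.coe_mapRingHom, Polynomial.map_C, innerMap_X]

/-- The big field `F₀(t)(X)`. -/
abbrev KK : Type := FractionRing (Polynomial (FF F₀))


def gmap : RR →+* KK F₀ := (algebraMap (Polynomial (FF F₀)) (KK F₀)).comp (psi F₀)

lemma gmap_injective : Function.Injective (gmap F₀) := by
  simp only [gmap, RingHom.coe_comp]
  exact (IsFractionRing.injective (Polynomial (FF F₀)) (KK F₀)).comp (psi_injective F₀)

/-- The embedding `ℚ(m,u) → F₀(t)(X)`. -/
def sigma : K2 →+* KK F₀ := IsFractionRing.lift (gmap_injective F₀)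

lemma sigma_algebraMap (p : RR) :
    sigma F₀ (algebraMap RR K2 p)
      = algebraMap (Polynomial (FF F₀)) (KK F₀) (psi F₀ p) :=
  IsFractionRing.lift_algebraMap _ _



lemma zmod2_self : ∀ a : ZMod 2, a + a = 0 := by decide
lemma zmod2_swap : ∀ a b c : ZMod 2, c = a + b → a = c + b := by decide
lemma zmod2_swap' : ∀ a b c : ZMod 2, c = a + b → a = b + c := by decide
lemma zmod2_cancel3 : ∀ a b c : ZMod 2, a + (b + c) = 0 → c = a + b := by decide
lemma zmod2_cancel3' : ∀ a b c : ZMod 2, a + (b + c) = 0 → a = b + c := by decide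

variable {F : Type} [Field F] [DecidableEq F] {W : WeierstrassCurve.Affine F}
variable {e₁ e₂ e₃ : F} {χ : F → ZMod 2}

section

variable (hW1 : W.a₁ = 0) (hW3 : W.a₃ = 0)
  (hW2 : W.a₂ = -(e₁ + e₂ + e₃)) (hW4 : W.a₄ = e₁*e₂ + e₁*e₃ + e₂*e₃)
  (hW6 : W.a₆ = -(e₁*e₂*e₃))

include hW1 hW3 hW2 hW4 hW6 in
lemma eqn_cubic {x y : F} (h : W.Equation x y) :
    y ^ 2 = (x - e₁) * (x - e₂) * (x - e₃) := by
  rw [equation_iff, hW1, hW2, hW3, hW4, hW6] at h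
  linear_combination h

include hW1 hW3 hW2 hW4 hW6 in
lemma y_eq_zero_of_root {x y : F} (h : W.Equation x y)
    (hx : (x - e₁) * (x - e₂) * (x - e₃) = 0) : y = 0 := by
  have h' := eqn_cubic hW1 hW3 hW2 hW4 hW6 h
  rw [hx] at h'
  exact pow_eq_zero_iff (n := 2) (by norm_num) |>.mp h'

include hW1 hW3 in
lemma negY_eq (x y : F) : W.negY x y = -y := by
  rw [WeierstrassCurve.Affine.negY, hW1, hW3]; ring

include hW1 hW3 hW2 hW4 hW6 in
/-- Master identity: evaluating the addition polynomial at a root of the cubic. -/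
lemma master {x₁ x₂ y₁ y₂ : F} (h₁ : W.Equation x₁ y₁) (h₂ : W.Equation x₂ y₂)
    (hxy : x₁ = x₂ → y₁ ≠ W.negY x₂ y₂) (e : F) (he : (e - e₁) * (e - e₂) * (e - e₃) = 0) :
    (x₁ - e) * ((x₂ - e) * ((W.addX x₁ x₂ (W.slope x₁ x₂ y₁ y₂)) - e))
      = (W.slope x₁ x₂ y₁ y₂ * (e - x₁) + y₁) ^ 2 := by
  have h := addPolynomial_slope h₁ h₂ (fun hh => hxy hh.1 hh.2)
  have h' := congrArg (Polynomial.eval e) h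
  rw [WeierstrassCurve.Affine.addPolynomial, WeierstrassCurve.Affine.linePolynomial,
    WeierstrassCurve.Affine.polynomial] at h'
  simp only [Polynomial.eval_add, Polynomial.eval_sub, Polynomial.eval_mul, Polynomial.eval_pow,
    Polynomial.eval_C, Polynomial.eval_X, Polynomial.eval_neg] at h'
  rw [hW1, hW2, hW3, hW4, hW6] at h'
  linear_combination -h' - he

include hW1 hW3 in
lemma KI {f₁ f₂ f₃ x₁ x₂ y₁ y₂ : F}
    (ha₂ : W.a₂ = -(f₁ + f₂ + f₃)) (ha₄ : W.a₄ = f₁*f₂ + f₁*f₃ + f₂*f₃)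
    (ha₆ : W.a₆ = -(f₁*f₂*f₃))
    (hx₁ : x₁ = f₁) (hy₁ : y₁ = 0) (hx : x₂ ≠ f₁) (h₂ : W.Equation x₂ y₂) :
    (W.addX x₁ x₂ (W.slope x₁ x₂ y₁ y₂) - f₁) * (x₂ - f₁) = (f₁ - f₂) * (f₁ - f₃) := by
  have hxne : x₁ ≠ x₂ := by rw [hx₁]; exact fun hh => hx hh.symm
  have hL : W.slope x₁ x₂ y₁ y₂ * (x₁ - x₂) = y₁ - y₂ := by
    rw [slope_of_X_ne hxne]
    exact div_mul_cancel₀ _ (sub_ne_zero.mpr hxne)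
  have h₂' : y₂ ^ 2 = (x₂ - f₁) * (x₂ - f₂) * (x₂ - f₃) := eqn_cubic hW1 hW3 ha₂ ha₄ ha₆ h₂
  apply mul_right_cancel₀ (sub_ne_zero.mpr hx)
  rw [WeierstrassCurve.Affine.addX, hW1, ha₂]
  rw [hx₁, hy₁] at hL ⊢
  linear_combination (-(W.slope f₁ x₂ 0 y₂ * (x₂ - f₁) + y₂)) * hL + h₂'

include hW1 hW3 in
lemma KI' {f₁ f₂ f₃ x₁ x₂ y₁ y₂ : F}
    (ha₂ : W.a₂ = -(f₁ + f₂ + f₃)) (ha₄ : W.a₄ = f₁*f₂ + f₁*f₃ + f₂*f₃)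
    (ha₆ : W.a₆ = -(f₁*f₂*f₃))
    (hx₂ : x₂ = f₁) (hy₂ : y₂ = 0) (hx : x₁ ≠ f₁) (h₁ : W.Equation x₁ y₁) :
    (W.addX x₁ x₂ (W.slope x₁ x₂ y₁ y₂) - f₁) * (x₁ - f₁) = (f₁ - f₂) * (f₁ - f₃) := by
  have hxne : x₁ ≠ x₂ := by rw [hx₂]; exact hx
  have hL : W.slope x₁ x₂ y₁ y₂ * (x₁ - x₂) = y₁ - y₂ := by
    rw [slope_of_X_ne hxne]
    exact div_mul_cancel₀ _ (sub_ne_zero.mpr hxne)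
  have h₁' : y₁ ^ 2 = (x₁ - f₁) * (x₁ - f₂) * (x₁ - f₃) := eqn_cubic hW1 hW3 ha₂ ha₄ ha₆ h₁
  apply mul_right_cancel₀ (sub_ne_zero.mpr hx)
  rw [WeierstrassCurve.Affine.addX, hW1, ha₂]
  rw [hx₂, hy₂] at hL ⊢
  linear_combination ((W.slope x₁ f₁ y₁ 0 * (x₁ - f₁) + y₁)) * hL + h₁'

end

open Classical

/-- The descent component map attached to the root `e₁`, composed with a character `χ`. -/
def eps (e₁ e₂ e₃ : F) (χ : F → ZMod 2) : W.Point → ZMod 2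
  | .zero => 0
  | @WeierstrassCurve.Affine.Point.some _ _ _ x _ _ =>
      if x = e₁ then χ ((e₁ - e₂) * (e₁ - e₃)) else χ (x - e₁)

lemma eps_zero : eps (W := W) e₁ e₂ e₃ χ 0 = 0 := rfl

lemma eps_some {x y : F} (h : W.Nonsingular x y) :
    eps e₁ e₂ e₃ χ (WeierstrassCurve.Affine.Point.some _ _ h)
      = if x = e₁ then χ ((e₁ - e₂) * (e₁ - e₃)) else χ (x - e₁) := rfl

lemma some_congr {x y x' y' : F} (h : W.Nonsingular x y) (h' : W.Nonsingular x' y')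
    (hx : x = x') (hy : y = y') :
    WeierstrassCurve.Affine.Point.some _ _ h = WeierstrassCurve.Affine.Point.some _ _ h' := by
  subst hx; subst hy; rfl

section

variable (hW1 : W.a₁ = 0) (hW3 : W.a₃ = 0)
  (hW2 : W.a₂ = -(e₁ + e₂ + e₃)) (hW4 : W.a₄ = e₁*e₂ + e₁*e₃ + e₂*e₃)
  (hW6 : W.a₆ = -(e₁*e₂*e₃))
  (hχ : ∀ a b : F, a ≠ 0 → b ≠ 0 → χ (a * b) = χ a + χ b)
  (h12 : e₁ ≠ e₂) (h13 : e₁ ≠ e₃) (h23 : e₂ ≠ e₃)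

include hχ in
lemma chi_sq' {a : F} (ha : a ≠ 0) : χ (a ^ 2) = 0 := by
  rw [pow_two, hχ a a ha ha]
  exact zmod2_self _

include hW1 hW3 hW2 hW4 hW6 hχ h12 h13 h23 in
lemma eps_add (P Q : W.Point) :
    eps e₁ e₂ e₃ χ (P + Q) = eps e₁ e₂ e₃ χ P + eps e₁ e₂ e₃ χ Q := by
  rcases P with _ | @⟨x₁, y₁, h₁⟩
  · rw [← zero_def, zero_add, eps_zero, zero_add]
  rcases Q with _ | @⟨x₂, y₂, h₂⟩
  · rw [← zero_def, add_zero, eps_zero, add_zero]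
  have hsq₁ : y₁ ^ 2 = (x₁ - e₁) * (x₁ - e₂) * (x₁ - e₃) := eqn_cubic hW1 hW3 hW2 hW4 hW6 h₁.1
  have hsq₂ : y₂ ^ 2 = (x₂ - e₁) * (x₂ - e₂) * (x₂ - e₃) := eqn_cubic hW1 hW3 hW2 hW4 hW6 h₂.1
  by_cases hxy : x₁ = x₂ ∧ y₁ = W.negY x₂ y₂
  · rw [add_of_Y_eq hxy.1 hxy.2, eps_some, eps_some, hxy.1]
    exact (zmod2_self _).symm
  · have hxy' : x₁ = x₂ → y₁ ≠ W.negY x₂ y₂ := fun hx hy => hxy ⟨hx, hy⟩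
    rw [add_some hxy, eps_some, eps_some, eps_some]
    by_cases hx₁e : x₁ = e₁
    · -- P = (e₁, 0)
      have hy₁0 : y₁ = 0 := y_eq_zero_of_root hW1 hW3 hW2 hW4 hW6 h₁.1 (by rw [hx₁e]; ring)
      have hx₂e : x₂ ≠ e₁ := by
        intro hx₂e
        have hy₂0 : y₂ = 0 := y_eq_zero_of_root hW1 hW3 hW2 hW4 hW6 h₂.1 (by rw [hx₂e]; ring)
        exact hxy' (hx₁e.trans hx₂e.symm)
          (by rw [negY_eq hW1 hW3, hy₂0, hy₁0, _root_.neg_zero])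
      by_cases hx₃e : W.addX x₁ x₂ (W.slope x₁ x₂ y₁ y₂) = e₁
      · exfalso
        have h₃ := nonsingular_add h₁ h₂ hxy
        have hy₃0 : W.addY x₁ x₂ y₁ (W.slope x₁ x₂ y₁ y₂) = 0 :=
          y_eq_zero_of_root hW1 hW3 hW2 hW4 hW6 h₃.1 (by rw [hx₃e]; ring)
        have hPQ : WeierstrassCurve.Affine.Point.some _ _ h₁ + WeierstrassCurve.Affine.Point.some _ _ h₂
            = WeierstrassCurve.Affine.Point.some _ _ h₁ := by
          rw [add_some hxy]
          exact some_congr _ _ (hx₃e.trans hx₁e.symm) (hy₃0.trans hy₁0.symm)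
        exact some_ne_zero h₂ (add_eq_left.mp hPQ)
      · rw [if_neg hx₃e, if_pos hx₁e, if_neg hx₂e]
        have key := KI hW1 hW3 hW2 hW4 hW6 hx₁e hy₁0 hx₂e h₂.1
        have h5 := hχ _ _ (sub_ne_zero.mpr hx₃e) (sub_ne_zero.mpr hx₂e)
        rw [key] at h5
        exact zmod2_swap _ _ _ h5
    · by_cases hx₂e : x₂ = e₁
      · -- Q = (e₁, 0)
        have hy₂0 : y₂ = 0 := y_eq_zero_of_root hW1 hW3 hW2 hW4 hW6 h₂.1 (by rw [hx₂e]; ring)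
        by_cases hx₃e : W.addX x₁ x₂ (W.slope x₁ x₂ y₁ y₂) = e₁
        · exfalso
          have h₃ := nonsingular_add h₁ h₂ hxy
          have hy₃0 : W.addY x₁ x₂ y₁ (W.slope x₁ x₂ y₁ y₂) = 0 :=
            y_eq_zero_of_root hW1 hW3 hW2 hW4 hW6 h₃.1 (by rw [hx₃e]; ring)
          have hPQ : WeierstrassCurve.Affine.Point.some _ _ h₁ + WeierstrassCurve.Affine.Point.some _ _ h₂
              = WeierstrassCurve.Affine.Point.some _ _ h₂ := by
            rw [add_some hxy]
            exact some_congr _ _ (hx₃e.trans hx₂e.symm) (hy₃0.trans hy₂0.symm)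
          exact some_ne_zero h₁ (add_eq_right.mp hPQ)
        · rw [if_neg hx₃e, if_neg hx₁e, if_pos hx₂e]
          have key := KI' hW1 hW3 hW2 hW4 hW6 hx₂e hy₂0 hx₁e h₁.1
          have h5 := hχ _ _ (sub_ne_zero.mpr hx₃e) (sub_ne_zero.mpr hx₁e)
          rw [key] at h5
          exact zmod2_swap' _ _ _ h5
      · -- x₁ ≠ e₁ and x₂ ≠ e₁
        by_cases hx₃e : W.addX x₁ x₂ (W.slope x₁ x₂ y₁ y₂) = e₁
        · rw [if_pos hx₃e, if_neg hx₁e, if_neg hx₂e]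
          by_cases hy₁0 : y₁ = 0
          · -- P is 2-torsion at e₂ or e₃
            have hroots : (x₁ - e₂) * (x₁ - e₃) = 0 := by
              have h0 : (x₁ - e₁) * ((x₁ - e₂) * (x₁ - e₃)) = 0 := by
                linear_combination (-1 : F) * hsq₁ + y₁ * hy₁0
              rcases mul_eq_zero.mp h0 with h | h
              · exact absurd (sub_eq_zero.mp h) hx₁e
              · exact h
            rcases mul_eq_zero.mp hroots with h | h
            · -- x₁ = e₂
              have hx₁2 : x₁ = e₂ := sub_eq_zero.mp h
              have hx₂2 : x₂ ≠ e₂ := by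
                intro hh
                have hy₂0 : y₂ = 0 :=
                  y_eq_zero_of_root hW1 hW3 hW2 hW4 hW6 h₂.1 (by rw [hh]; ring)
                exact hxy' (hx₁2.trans hh.symm)
                  (by rw [negY_eq hW1 hW3, hy₂0, hy₁0, _root_.neg_zero])
              have key := KI hW1 hW3 (f₁ := e₂) (f₂ := e₁) (f₃ := e₃)
                (by rw [hW2]; ring) (by rw [hW4]; ring) (by rw [hW6]; ring)
                hx₁2 hy₁0 hx₂2 h₂.1
              rw [hx₃e] at key
              have hx₂3 : x₂ = e₃ := by
                have h0 : (e₁ - e₂) * (x₂ - e₃) = 0 := by linear_combination key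
                rcases mul_eq_zero.mp h0 with hh | hh
                · exact absurd (sub_eq_zero.mp hh) h12
                · exact sub_eq_zero.mp hh
              rw [hx₁2, hx₂3,
                ← hχ _ _ (sub_ne_zero.mpr (Ne.symm h12)) (sub_ne_zero.mpr (Ne.symm h13)),
                show (e₂ - e₁) * (e₃ - e₁) = (e₁ - e₂) * (e₁ - e₃) by ring]
            · -- x₁ = e₃
              have hx₁3 : x₁ = e₃ := sub_eq_zero.mp h
              have hx₂3 : x₂ ≠ e₃ := by
                intro hh
                have hy₂0 : y₂ = 0 :=
                  y_eq_zero_of_root hW1 hW3 hW2 hW4 hW6 h₂.1 (by rw [hh]; ring)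
                exact hxy' (hx₁3.trans hh.symm)
                  (by rw [negY_eq hW1 hW3, hy₂0, hy₁0, _root_.neg_zero])
              have key := KI hW1 hW3 (f₁ := e₃) (f₂ := e₁) (f₃ := e₂)
                (by rw [hW2]; ring) (by rw [hW4]; ring) (by rw [hW6]; ring)
                hx₁3 hy₁0 hx₂3 h₂.1
              rw [hx₃e] at key
              have hx₂2 : x₂ = e₂ := by
                have h0 : (e₁ - e₃) * (x₂ - e₂) = 0 := by linear_combination key
                rcases mul_eq_zero.mp h0 with hh | hh
                · exact absurd (sub_eq_zero.mp hh) h13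
                · exact sub_eq_zero.mp hh
              rw [hx₁3, hx₂2,
                ← hχ _ _ (sub_ne_zero.mpr (Ne.symm h13)) (sub_ne_zero.mpr (Ne.symm h12)),
                show (e₃ - e₁) * (e₂ - e₁) = (e₁ - e₂) * (e₁ - e₃) by ring]
          · by_cases hy₂0 : y₂ = 0
            · -- Q is 2-torsion at e₂ or e₃
              have hroots : (x₂ - e₂) * (x₂ - e₃) = 0 := by
                have h0 : (x₂ - e₁) * ((x₂ - e₂) * (x₂ - e₃)) = 0 := by
                  linear_combination (-1 : F) * hsq₂ + y₂ * hy₂0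
                rcases mul_eq_zero.mp h0 with h | h
                · exact absurd (sub_eq_zero.mp h) hx₂e
                · exact h
              rcases mul_eq_zero.mp hroots with h | h
              · -- x₂ = e₂
                have hx₂2 : x₂ = e₂ := sub_eq_zero.mp h
                have hx₁2 : x₁ ≠ e₂ := by
                  intro hh
                  exact hy₁0 (y_eq_zero_of_root hW1 hW3 hW2 hW4 hW6 h₁.1 (by rw [hh]; ring))
                have key := KI' hW1 hW3 (f₁ := e₂) (f₂ := e₁) (f₃ := e₃)
                  (by rw [hW2]; ring) (by rw [hW4]; ring) (by rw [hW6]; ring)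
                  hx₂2 hy₂0 hx₁2 h₁.1
                rw [hx₃e] at key
                have hx₁3 : x₁ = e₃ := by
                  have h0 : (e₁ - e₂) * (x₁ - e₃) = 0 := by linear_combination key
                  rcases mul_eq_zero.mp h0 with hh | hh
                  · exact absurd (sub_eq_zero.mp hh) h12
                  · exact sub_eq_zero.mp hh
                rw [hx₁3, hx₂2,
                  ← hχ _ _ (sub_ne_zero.mpr (Ne.symm h13)) (sub_ne_zero.mpr (Ne.symm h12)),
                  show (e₃ - e₁) * (e₂ - e₁) = (e₁ - e₂) * (e₁ - e₃) by ring]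
              · -- x₂ = e₃
                have hx₂3 : x₂ = e₃ := sub_eq_zero.mp h
                have hx₁3 : x₁ ≠ e₃ := by
                  intro hh
                  exact hy₁0 (y_eq_zero_of_root hW1 hW3 hW2 hW4 hW6 h₁.1 (by rw [hh]; ring))
                have key := KI' hW1 hW3 (f₁ := e₃) (f₂ := e₁) (f₃ := e₂)
                  (by rw [hW2]; ring) (by rw [hW4]; ring) (by rw [hW6]; ring)
                  hx₂3 hy₂0 hx₁3 h₁.1
                rw [hx₃e] at key
                have hx₁2 : x₁ = e₂ := by
                  have h0 : (e₁ - e₃) * (x₁ - e₂) = 0 := by linear_combination key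
                  rcases mul_eq_zero.mp h0 with hh | hh
                  · exact absurd (sub_eq_zero.mp hh) h13
                  · exact sub_eq_zero.mp hh
                rw [hx₁2, hx₂3,
                  ← hχ _ _ (sub_ne_zero.mpr (Ne.symm h12)) (sub_ne_zero.mpr (Ne.symm h13)),
                  show (e₂ - e₁) * (e₃ - e₁) = (e₁ - e₂) * (e₁ - e₃) by ring]
            · -- main case: y₁ ≠ 0 and y₂ ≠ 0, sum is (e₁, ·)
              have hx₁2 : x₁ - e₂ ≠ 0 := by
                intro hh
                exact hy₁0 (by
                  have : y₁ ^ 2 = 0 := by rw [hsq₁, hh]; ring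
                  exact pow_eq_zero_iff (n := 2) (by norm_num) |>.mp this)
              have hx₁3 : x₁ - e₃ ≠ 0 := by
                intro hh
                exact hy₁0 (by
                  have : y₁ ^ 2 = 0 := by rw [hsq₁, hh]; ring
                  exact pow_eq_zero_iff (n := 2) (by norm_num) |>.mp this)
              have hx₂2 : x₂ - e₂ ≠ 0 := by
                intro hh
                exact hy₂0 (by
                  have : y₂ ^ 2 = 0 := by rw [hsq₂, hh]; ring
                  exact pow_eq_zero_iff (n := 2) (by norm_num) |>.mp this)
              have hx₂3 : x₂ - e₃ ≠ 0 := by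
                intro hh
                exact hy₂0 (by
                  have : y₂ ^ 2 = 0 := by rw [hsq₂, hh]; ring
                  exact pow_eq_zero_iff (n := 2) (by norm_num) |>.mp this)
              have M2 := master hW1 hW3 hW2 hW4 hW6 h₁.1 h₂.1 hxy' e₂ (by ring)
              have M3 := master hW1 hW3 hW2 hW4 hW6 h₁.1 h₂.1 hxy' e₃ (by ring)
              rw [hx₃e] at M2 M3
              set L := W.slope x₁ x₂ y₁ y₂ with hLdef
              have hw₂ : L * (e₂ - x₁) + y₁ ≠ 0 := by
                intro hh
                have h0 : (x₁ - e₂) * ((x₂ - e₂) * (e₁ - e₂)) = 0 := by rw [M2, hh]; ring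
                exact (mul_ne_zero hx₁2 (mul_ne_zero hx₂2 (sub_ne_zero.mpr h12))) h0
              have hw₃ : L * (e₃ - x₁) + y₁ ≠ 0 := by
                intro hh
                have h0 : (x₁ - e₃) * ((x₂ - e₃) * (e₁ - e₃)) = 0 := by rw [M3, hh]; ring
                exact (mul_ne_zero hx₁3 (mul_ne_zero hx₂3 (sub_ne_zero.mpr h13))) h0
              have hA : (e₁ - e₂) * (e₁ - e₃) ≠ 0 :=
                mul_ne_zero (sub_ne_zero.mpr h12) (sub_ne_zero.mpr h13)
              have hB1 : x₁ - e₁ ≠ 0 := sub_ne_zero.mpr hx₁e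
              have hB2 : x₂ - e₁ ≠ 0 := sub_ne_zero.mpr hx₂e
              have hyy : y₁ * y₂ ≠ 0 := mul_ne_zero hy₁0 hy₂0
              have bigid : ((e₁ - e₂) * (e₁ - e₃)) * ((x₁ - e₁) * ((x₂ - e₁) * ((y₁ * y₂) ^ 2)))
                  = ((x₁ - e₁) * ((x₂ - e₁) *
                      ((L * (e₂ - x₁) + y₁) * (L * (e₃ - x₁) + y₁)))) ^ 2 := by
                linear_combination
                  ((e₁-e₂)*(e₁-e₃)*(x₁-e₁)*(x₂-e₁)*y₂^2) * hsq₁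
                  + ((e₁-e₂)*(e₁-e₃)*(x₁-e₁)*(x₂-e₁)*((x₁-e₁)*(x₁-e₂)*(x₁-e₃))) * hsq₂
                  + ((x₁-e₁)^2*(x₂-e₁)^2*(L*(e₃-x₁)+y₁)^2) * M2
                  + ((x₁-e₁)^2*(x₂-e₁)^2*((x₁-e₂)*((x₂-e₂)*(e₁-e₂)))) * M3
              have hcongr := congrArg χ bigid
              rw [hχ _ _ hA (mul_ne_zero hB1 (mul_ne_zero hB2 (pow_ne_zero _ hyy))),
                  hχ _ _ hB1 (mul_ne_zero hB2 (pow_ne_zero _ hyy)),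
                  hχ _ _ hB2 (pow_ne_zero _ hyy),
                  chi_sq' hχ hyy,
                  chi_sq' hχ (mul_ne_zero hB1 (mul_ne_zero hB2 (mul_ne_zero hw₂ hw₃)))] at hcongr
              rw [add_zero] at hcongr
              exact zmod2_cancel3' _ _ _ hcongr
        · -- generic case
          rw [if_neg hx₃e, if_neg hx₁e, if_neg hx₂e]
          have M1 := master hW1 hW3 hW2 hW4 hW6 h₁.1 h₂.1 hxy' e₁ (by ring)
          have hw : W.slope x₁ x₂ y₁ y₂ * (e₁ - x₁) + y₁ ≠ 0 := by
            intro hh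
            have h0 : (x₁ - e₁) * ((x₂ - e₁) * (W.addX x₁ x₂ (W.slope x₁ x₂ y₁ y₂) - e₁)) = 0 := by
              rw [M1, hh]; ring
            exact (mul_ne_zero (sub_ne_zero.mpr hx₁e)
              (mul_ne_zero (sub_ne_zero.mpr hx₂e) (sub_ne_zero.mpr hx₃e))) h0
          have hχM := congrArg χ M1
          rw [hχ _ _ (sub_ne_zero.mpr hx₁e)
                (mul_ne_zero (sub_ne_zero.mpr hx₂e) (sub_ne_zero.mpr hx₃e)),
              hχ _ _ (sub_ne_zero.mpr hx₂e) (sub_ne_zero.mpr hx₃e),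
              chi_sq' hχ hw] at hχM
          exact zmod2_cancel3 _ _ _ hχM

end



/-! ### Concrete characters on `K2 = ℚ(m, u)` -/

section Concrete

/-- The `m`-adic character on `ℚ(m,u)`. -/
def chim : K2 → ZMod 2 := fun z => chi (0 : FF ℚ) (sigma ℚ z)

/-- `i` as an element of `ℂ(t)`. -/
def iC : FF ℂ := algebraMap (Polynomial ℂ) (FF ℂ) (Polynomial.C Complex.I)

/-- The `(m² + 1)`-adic character on `ℚ(m,u)` (order of vanishing at `m = i`). -/
def chic : K2 → ZMod 2 := fun z => chi iC (sigma ℂ z)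

variable (F₀ : Type) [Field F₀] [Algebra ℚ F₀]

lemma sigma_ne_zero {z : K2} (hz : z ≠ 0) : sigma F₀ z ≠ 0 := by
  intro h
  exact hz ((map_eq_zero_iff _ (RingHom.injective _)).mp h)

lemma chim_mul {z w : K2} (hz : z ≠ 0) (hw : w ≠ 0) : chim (z * w) = chim z + chim w := by
  unfold chim
  rw [map_mul]
  exact chi_mul _ _ _ (sigma_ne_zero ℚ hz) (sigma_ne_zero ℚ hw)

lemma chic_mul {z w : K2} (hz : z ≠ 0) (hw : w ≠ 0) : chic (z * w) = chic z + chic w := by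
  unfold chic
  rw [map_mul]
  exact chi_mul _ _ _ (sigma_ne_zero ℂ hz) (sigma_ne_zero ℂ hw)

-- polynomial atoms in `RR`
private abbrev pm : RR := MvPolynomial.X 0
private abbrev pu : RR := MvPolynomial.X 1
private abbrev pc : RR := MvPolynomial.X 0 ^ 2 + 1
private abbrev pg : RR := 2 * MvPolynomial.X 1 - MvPolynomial.X 0 * (MvPolynomial.X 1 ^ 2 - 1)
private abbrev pw : RR := MvPolynomial.X 1 ^ 2 + 1
private abbrev ps : RR := MvPolynomial.X 0 + MvPolynomial.X 1
private abbrev pq : RR := MvPolynomial.X 0 * MvPolynomial.X 1 - 1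

lemma alg_m2 : m2 = algebraMap RR K2 pm := rfl
lemma alg_u2 : u2 = algebraMap RR K2 pu := rfl
lemma alg_c2 : (m2 ^ 2 + 1 : K2) = algebraMap RR K2 pc := by
  simp [m2, map_pow]
lemma alg_g2 : (2 * u2 - m2 * (u2 ^ 2 - 1) : K2) = algebraMap RR K2 pg := by
  simp [m2, u2, map_pow, map_ofNat]
lemma alg_w2 : (u2 ^ 2 + 1 : K2) = algebraMap RR K2 pw := by
  simp [u2, map_pow]
lemma alg_s2 : (m2 + u2 : K2) = algebraMap RR K2 ps := by
  simp [m2, u2]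
lemma alg_q2 : (m2 * u2 - 1 : K2) = algebraMap RR K2 pq := by
  simp [m2, u2]
lemma alg_neg1 : (-1 : K2) = algebraMap RR K2 (-1) := by
  simp

-- nonvanishing in `K2` via evaluation at `(m, u) = (2, 1)`
lemma nzK (p : RR) (h : MvPolynomial.eval (![2, 1] : Fin 2 → ℚ) p ≠ 0) :
    algebraMap RR K2 p ≠ 0 := by
  intro h0
  apply h
  have hp : p = 0 := IsFractionRing.injective RR K2 (by rw [h0, _root_.map_zero])
  rw [hp, _root_.map_zero]

lemma m2_ne : m2 ≠ 0 := by
  rw [alg_m2]; exact nzK _ (by norm_num)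
lemma u2_ne : u2 ≠ 0 := by
  rw [alg_u2]; exact nzK _ (by norm_num)
lemma c2_ne : (m2 ^ 2 + 1 : K2) ≠ 0 := by
  rw [alg_c2]; exact nzK _ (by norm_num)
lemma g2_ne : (2 * u2 - m2 * (u2 ^ 2 - 1) : K2) ≠ 0 := by
  rw [alg_g2]; exact nzK _ (by norm_num)
lemma w2_ne : (u2 ^ 2 + 1 : K2) ≠ 0 := by
  rw [alg_w2]; exact nzK _ (by norm_num)
lemma s2_ne : (m2 + u2 : K2) ≠ 0 := by
  rw [alg_s2]; exact nzK _ (by norm_num)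
lemma q2_ne : (m2 * u2 - 1 : K2) ≠ 0 := by
  rw [alg_q2]; exact nzK _ (by norm_num)

lemma N2_ne : N2 ≠ 0 :=
  mul_ne_zero (mul_ne_zero m2_ne c2_ne) g2_ne
lemma N2w_ne : N2 * (u2 ^ 2 + 1) ≠ 0 := mul_ne_zero N2_ne w2_ne
lemma N2_ne_N2w : N2 ≠ N2 * (u2 ^ 2 + 1) := by
  intro h
  have h0 : N2 * u2 ^ 2 = 0 := by linear_combination -h
  exact mul_ne_zero N2_ne (pow_ne_zero _ u2_ne) h0

end Concrete


section CharValues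

-- helper: zero multiplicity from nonvanishing evaluation
lemma chi_alg_of_eval {F₀ : Type} [Field F₀] [Algebra ℚ F₀] (a : FF F₀) (p : RR)
    (h : Polynomial.eval a (psi F₀ p) ≠ 0) :
    chi a (sigma F₀ (algebraMap RR K2 p)) = 0 := by
  have hp : psi F₀ p ≠ 0 := fun h0 => h (by rw [h0, Polynomial.eval_zero])
  rw [sigma_algebraMap, chi_algebraMap _ _ hp, rootMultiplicity_eq_zero h, Nat.cast_zero]

-- nonvanishing in `FF F₀` via the underlying polynomial
lemma ff_ne {F₀ : Type} [Field F₀] {q : Polynomial F₀} (hq : q ≠ 0) :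
    algebraMap (Polynomial F₀) (FF F₀) q ≠ 0 := by
  intro h
  exact hq (IsFractionRing.injective (Polynomial F₀) (FF F₀) (by rw [h, _root_.map_zero]))

lemma poly_ne {F₀ : Type} [Field F₀] {q : Polynomial F₀} (x : F₀)
    (h : Polynomial.eval x q ≠ 0) : q ≠ 0 :=
  fun h0 => h (by rw [h0, Polynomial.eval_zero])

lemma tt_ne {F₀ : Type} [Field F₀] [Algebra ℚ F₀] : tt F₀ ≠ 0 :=
  ff_ne (Polynomial.X_ne_zero)

-- psi images of the atoms
lemma psi_pm {F₀ : Type} [Field F₀] [Algebra ℚ F₀] : psi F₀ pm = Polynomial.X := psi_X0 F₀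
lemma psi_pc {F₀ : Type} [Field F₀] [Algebra ℚ F₀] :
    psi F₀ pc = Polynomial.X ^ 2 + 1 := by
  simp [map_pow, psi_X0]
lemma psi_pg {F₀ : Type} [Field F₀] [Algebra ℚ F₀] :
    psi F₀ pg = 2 * Polynomial.C (tt F₀)
      - Polynomial.X * (Polynomial.C (tt F₀) ^ 2 - 1) := by
  simp [map_pow, map_ofNat, psi_X0, psi_X1]
lemma psi_pw {F₀ : Type} [Field F₀] [Algebra ℚ F₀] :
    psi F₀ pw = Polynomial.C (tt F₀) ^ 2 + 1 := by
  simp [map_pow, psi_X1]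
lemma psi_ps {F₀ : Type} [Field F₀] [Algebra ℚ F₀] :
    psi F₀ ps = Polynomial.X + Polynomial.C (tt F₀) := by
  simp [psi_X0, psi_X1]
lemma psi_neg1 {F₀ : Type} [Field F₀] [Algebra ℚ F₀] : psi F₀ (-1 : RR) = -1 := by
  simp

-- elements of FF F₀ used in evaluations
lemma tt_sq_add_one_ne {F₀ : Type} [Field F₀] [Algebra ℚ F₀] : (tt F₀) ^ 2 + 1 ≠ 0 := by
  have : (tt F₀) ^ 2 + 1
      = algebraMap (Polynomial F₀) (FF F₀) (Polynomial.X ^ 2 + 1) := by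
    simp [tt, map_pow]
  rw [this]
  refine ff_ne (poly_ne 0 ?_)
  simp

lemma two_tt_ne {F₀ : Type} [Field F₀] [Algebra ℚ F₀] : (2 : FF F₀) * tt F₀ ≠ 0 := by
  have : (2 : FF F₀) * tt F₀
      = algebraMap (Polynomial F₀) (FF F₀) (2 * Polynomial.X) := by
    simp [tt, map_ofNat]
  rw [this]
  refine ff_ne (poly_ne 1 ?_)
  haveI : CharZero F₀ := charZero_of_injective_algebraMap (algebraMap ℚ F₀).injective
  simp

-- ### chim values
lemma chim_m2 : chim m2 = 1 := by
  unfold chim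
  rw [alg_m2, sigma_algebraMap, psi_pm,
    chi_algebraMap _ _ Polynomial.X_ne_zero]
  have hX : (Polynomial.X : Polynomial (FF ℚ)) = Polynomial.X - Polynomial.C 0 := by simp
  rw [hX, Polynomial.rootMultiplicity_X_sub_C_self]
  rfl

lemma chim_c2 : chim (m2 ^ 2 + 1) = 0 := by
  unfold chim
  rw [alg_c2]
  refine chi_alg_of_eval _ _ ?_
  rw [psi_pc]
  intro h
  rw [Polynomial.eval_add, Polynomial.eval_pow, Polynomial.eval_X, Polynomial.eval_one,
    zero_pow (by norm_num), zero_add] at h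
  exact one_ne_zero h

lemma chim_g2 : chim (2 * u2 - m2 * (u2 ^ 2 - 1)) = 0 := by
  unfold chim
  rw [alg_g2]
  refine chi_alg_of_eval _ _ ?_
  rw [psi_pg]
  intro h
  rw [Polynomial.eval_sub, Polynomial.eval_mul, Polynomial.eval_mul, Polynomial.eval_X,
    Polynomial.eval_ofNat, Polynomial.eval_C, zero_mul, sub_zero] at h
  exact two_tt_ne h

lemma chim_w2 : chim (u2 ^ 2 + 1) = 0 := by
  unfold chim
  rw [alg_w2]
  refine chi_alg_of_eval _ _ ?_
  rw [psi_pw]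
  simpa using tt_sq_add_one_ne

lemma chim_s2 : chim (m2 + u2) = 0 := by
  unfold chim
  rw [alg_s2]
  refine chi_alg_of_eval _ _ ?_
  rw [psi_ps]
  simpa using tt_ne

lemma chim_neg1 : chim (-1) = 0 := by
  unfold chim
  rw [alg_neg1]
  refine chi_alg_of_eval _ _ ?_
  rw [psi_neg1]
  simp

-- ### chic values
lemma iC_ne : iC ≠ 0 := by
  refine ff_ne (poly_ne 0 ?_)
  simpa using Complex.I_ne_zero

lemma iC_sq : iC ^ 2 = -1 := by
  rw [iC, ← map_pow, ← Polynomial.C_pow, Complex.I_sq]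
  simp

lemma chic_m2 : chic m2 = 0 := by
  unfold chic
  rw [alg_m2]
  refine chi_alg_of_eval _ _ ?_
  rw [psi_pm]
  simpa using iC_ne

lemma chic_c2 : chic (m2 ^ 2 + 1) = 1 := by
  unfold chic
  rw [alg_c2, sigma_algebraMap, psi_pc]
  have hCi2 : (Polynomial.C iC : Polynomial (FF ℂ)) ^ 2 = -1 := by
    rw [← Polynomial.C_pow, iC_sq]
    simp
  have hfac : (Polynomial.X ^ 2 + 1 : Polynomial (FF ℂ))
      = (Polynomial.X - Polynomial.C iC) * (Polynomial.X + Polynomial.C iC) := by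
    linear_combination hCi2
  have h1 : (Polynomial.X - Polynomial.C iC : Polynomial (FF ℂ)) ≠ 0 :=
    Polynomial.X_sub_C_ne_zero iC
  have h2ne : (Polynomial.X + Polynomial.C iC : Polynomial (FF ℂ)) ≠ 0 :=
    poly_ne 0 (by simpa using iC_ne)
  have hev : Polynomial.eval iC (Polynomial.X + Polynomial.C iC : Polynomial (FF ℂ)) ≠ 0 := by
    have : Polynomial.eval iC (Polynomial.X + Polynomial.C iC : Polynomial (FF ℂ)) = 2 * iC := by
      simp; ring
    rw [this]
    have h2 : (2 : FF ℂ) ≠ 0 := by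
      have : (2 : FF ℂ) = algebraMap (Polynomial ℂ) (FF ℂ) 2 := by rw [map_ofNat]
      rw [this]
      refine ff_ne (poly_ne 0 ?_)
      norm_num
    exact mul_ne_zero h2 iC_ne
  rw [chi_algebraMap _ _ (by rw [hfac]; exact mul_ne_zero h1 h2ne), hfac,
    Polynomial.rootMultiplicity_mul (mul_ne_zero h1 h2ne),
    Polynomial.rootMultiplicity_X_sub_C_self, rootMultiplicity_eq_zero hev]
  rfl

lemma chic_g2 : chic (2 * u2 - m2 * (u2 ^ 2 - 1)) = 0 := by
  unfold chic
  rw [alg_g2]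
  refine chi_alg_of_eval _ _ ?_
  rw [psi_pg]
  have : Polynomial.eval iC (2 * Polynomial.C (tt ℂ)
      - Polynomial.X * (Polynomial.C (tt ℂ) ^ 2 - 1))
      = algebraMap (Polynomial ℂ) (FF ℂ)
        (2 * Polynomial.X - Polynomial.C Complex.I * (Polynomial.X ^ 2 - 1)) := by
    simp [tt, iC, map_ofNat, map_pow]
  rw [this]
  refine ff_ne (poly_ne 0 ?_)
  simpa using Complex.I_ne_zero

lemma chic_w2 : chic (u2 ^ 2 + 1) = 0 := by
  unfold chic
  rw [alg_w2]
  refine chi_alg_of_eval _ _ ?_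
  rw [psi_pw]
  simpa using tt_sq_add_one_ne

lemma chic_s2 : chic (m2 + u2) = 0 := by
  unfold chic
  rw [alg_s2]
  refine chi_alg_of_eval _ _ ?_
  rw [psi_ps]
  have : Polynomial.eval iC (Polynomial.X + Polynomial.C (tt ℂ))
      = algebraMap (Polynomial ℂ) (FF ℂ) (Polynomial.C Complex.I + Polynomial.X) := by
    simp [tt, iC]
  rw [this]
  refine ff_ne (poly_ne 0 ?_)
  simpa using Complex.I_ne_zero

lemma chic_neg1 : chic (-1) = 0 := by
  unfold chic
  rw [alg_neg1]
  refine chi_alg_of_eval _ _ ?_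
  rw [psi_neg1]
  simp

end CharValues


/-! ### Composite character values and the three homomorphisms -/

section Final

lemma N2_unfold : N2 = m2 * (m2 ^ 2 + 1) * (2 * u2 - m2 * (u2 ^ 2 - 1)) := rfl

lemma chim_N2 : chim N2 = 1 := by
  rw [N2_unfold, chim_mul (mul_ne_zero m2_ne c2_ne) g2_ne, chim_mul m2_ne c2_ne,
    chim_m2, chim_c2, chim_g2]
  decide

lemma chim_N2w : chim (N2 * (u2 ^ 2 + 1)) = 1 := by
  rw [chim_mul N2_ne w2_ne, chim_N2, chim_w2]
  decide

lemma chim_negN2 : chim (0 - N2) = 1 := by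
  have h : (0 : K2) - N2 = (-1) * N2 := by ring
  rw [h, chim_mul (neg_ne_zero.mpr one_ne_zero) N2_ne, chim_neg1, chim_N2]
  decide

lemma chim_xP : chim ((m2 ^ 2 + 1) * (m2 + u2) ^ 2) = 0 := by
  rw [chim_mul c2_ne (pow_ne_zero _ s2_ne), chim_c2, sq,
    chim_mul s2_ne s2_ne, chim_s2]
  decide

lemma chic_N2 : chic N2 = 1 := by
  rw [N2_unfold, chic_mul (mul_ne_zero m2_ne c2_ne) g2_ne, chic_mul m2_ne c2_ne,
    chic_m2, chic_c2, chic_g2]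
  decide

lemma chic_N2w : chic (N2 * (u2 ^ 2 + 1)) = 1 := by
  rw [chic_mul N2_ne w2_ne, chic_N2, chic_w2]
  decide

lemma chic_xP : chic ((m2 ^ 2 + 1) * (m2 + u2) ^ 2) = 1 := by
  rw [chic_mul c2_ne (pow_ne_zero _ s2_ne), chic_c2, sq,
    chic_mul s2_ne s2_ne, chic_s2]
  decide

lemma chic_T0 : chic ((0 - N2) * (0 - N2 * (u2 ^ 2 + 1))) = 0 := by
  have h : ((0 : K2) - N2) * (0 - N2 * (u2 ^ 2 + 1)) = N2 * (N2 * (u2 ^ 2 + 1)) := by ring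
  rw [h, chic_mul N2_ne N2w_ne, chic_N2, chic_N2w]
  decide

lemma E2a1 : E2.a₁ = 0 := rfl
lemma E2a3 : E2.a₃ = 0 := rfl
lemma E2a2 : E2.a₂ = -(N2 + N2 * (u2 ^ 2 + 1)) := rfl
lemma E2a4 : E2.a₄ = N2 * (N2 * (u2 ^ 2 + 1)) := rfl
lemma E2a6 : E2.a₆ = 0 := rfl

lemma hA2 : E2.a₂ = -(0 + N2 + N2 * (u2 ^ 2 + 1)) := by rw [E2a2]; ring
lemma hA4 : E2.a₄ = 0 * N2 + 0 * (N2 * (u2 ^ 2 + 1)) + N2 * (N2 * (u2 ^ 2 + 1)) := by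
  rw [E2a4]; ring
lemma hA6 : E2.a₆ = -(0 * N2 * (N2 * (u2 ^ 2 + 1))) := by rw [E2a6]; ring
lemma hB2 : E2.a₂ = -(N2 + 0 + N2 * (u2 ^ 2 + 1)) := by rw [E2a2]; ring
lemma hB4 : E2.a₄ = N2 * 0 + N2 * (N2 * (u2 ^ 2 + 1)) + 0 * (N2 * (u2 ^ 2 + 1)) := by
  rw [E2a4]; ring
lemma hB6 : E2.a₆ = -(N2 * 0 * (N2 * (u2 ^ 2 + 1))) := by rw [E2a6]; ring

/-- descent component at the root `0`, with the `(m²+1)`-adic character. -/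
def hom1 : E2.Point →+ ZMod 2 :=
  AddMonoidHom.mk' (eps 0 N2 (N2 * (u2 ^ 2 + 1)) chic)
    (eps_add E2a1 E2a3 hA2 hA4 hA6 (fun _ _ ha hb => chic_mul ha hb)
      (Ne.symm N2_ne) (Ne.symm N2w_ne) N2_ne_N2w)

/-- descent component at the root `0`, with the `m`-adic character. -/
def hom2 : E2.Point →+ ZMod 2 :=
  AddMonoidHom.mk' (eps 0 N2 (N2 * (u2 ^ 2 + 1)) chim)
    (eps_add E2a1 E2a3 hA2 hA4 hA6 (fun _ _ ha hb => chim_mul ha hb)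
      (Ne.symm N2_ne) (Ne.symm N2w_ne) N2_ne_N2w)

/-- descent component at the root `N`, with the `m`-adic character. -/
def hom3 : E2.Point →+ ZMod 2 :=
  AddMonoidHom.mk' (eps N2 0 (N2 * (u2 ^ 2 + 1)) chim)
    (eps_add E2a1 E2a3 hB2 hB4 hB6 (fun _ _ ha hb => chim_mul ha hb)
      N2_ne N2_ne_N2w (Ne.symm N2w_ne))

lemma xP_ne : ((m2 ^ 2 + 1) * (m2 + u2) ^ 2 : K2) ≠ 0 :=
  mul_ne_zero c2_ne (pow_ne_zero _ s2_ne)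

lemma charZeroK2 : CharZero K2 :=
  charZero_of_injective_algebraMap (IsFractionRing.injective RR K2)

lemma two_ne_K2 : (2 : K2) ≠ 0 := by
  haveI := charZeroK2
  have h : ((2 : ℕ) : K2) ≠ 0 := Nat.cast_ne_zero.mpr (by norm_num)
  simpa using h

lemma yP_ne : (u2 ^ 2 * (m2 ^ 2 + 1) ^ 2 * (m2 + u2) * (m2 * u2 - 1) : K2) ≠ 0 :=
  mul_ne_zero (mul_ne_zero (mul_ne_zero (pow_ne_zero _ u2_ne) (pow_ne_zero _ c2_ne)) s2_ne) q2_ne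

lemma main_aux (hP : E2.Nonsingular ((m2 ^ 2 + 1) * (m2 + u2) ^ 2)
    (u2 ^ 2 * (m2 ^ 2 + 1) ^ 2 * (m2 + u2) * (m2 * u2 - 1))) :
    ∀ k : ℕ, 1 ≤ k → k • (WeierstrassCurve.Affine.Point.some _ _ hP) ≠ 0 := by
  intro k hk hkP
  set P : E2.Point := WeierstrassCurve.Affine.Point.some _ _ hP with hPdef
  have hfin : IsOfFinAddOrder P :=
    isOfFinAddOrder_iff_nsmul_eq_zero.mpr ⟨k, by omega, hkP⟩
  have hnpos : 0 < addOrderOf P := IsOfFinAddOrder.addOrderOf_pos hfin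
  have hnP : addOrderOf P • P = 0 := addOrderOf_nsmul_eq_zero P
  -- the order is even, since hom1 P = 1
  have h1P : hom1 P = 1 := by
    show eps 0 N2 (N2 * (u2 ^ 2 + 1)) chic (WeierstrassCurve.Affine.Point.some _ _ hP) = 1
    rw [eps_some, if_neg xP_ne, sub_zero]
    exact chic_xP
  have h2P : hom2 P = 0 := by
    show eps 0 N2 (N2 * (u2 ^ 2 + 1)) chim (WeierstrassCurve.Affine.Point.some _ _ hP) = 0
    rw [eps_some, if_neg xP_ne, sub_zero]
    exact chim_xP
  have hncast : ((addOrderOf P : ℕ) : ZMod 2) = 0 := by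
    have h := map_nsmul hom1 (addOrderOf P) P
    rw [hnP, _root_.map_zero, nsmul_eq_mul, h1P, mul_one] at h
    exact h.symm
  have h2n : 2 ∣ addOrderOf P := (ZMod.natCast_eq_zero_iff _ 2).mp hncast
  obtain ⟨m', hm'⟩ := h2n
  have hm'pos : 0 < m' := by omega
  -- T := m' • P is affine 2-torsion
  have hTT : m' • P + m' • P = 0 := by
    rw [← add_nsmul, show m' + m' = 2 * m' from by ring, ← hm']
    exact hnP
  have hTne : m' • P ≠ 0 := by
    intro h0
    have hdvd := addOrderOf_dvd_iff_nsmul_eq_zero.mpr h0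
    rw [hm'] at hdvd
    have := Nat.le_of_dvd hm'pos hdvd
    omega
  have hhomT : ∀ h : E2.Point →+ ZMod 2, h (m' • P) = (m' : ZMod 2) * h P := by
    intro h
    rw [map_nsmul, nsmul_eq_mul]
  rcases hc : m' • P with _ | @⟨x, y, hT⟩
  · exact hTne (hc.trans zero_def.symm)
  · -- 2-torsion: y = 0
    have hy0 : y = 0 := by
      by_contra hy
      have hYne : y ≠ E2.negY x y := by
        rw [negY_eq E2a1 E2a3]
        intro hcon
        apply hy
        have h2y : (2 : K2) * y = 0 := by linear_combination hcon
        exact (mul_eq_zero.mp h2y).resolve_left two_ne_K2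
      have hadd := add_of_Y_ne (h₁ := hT) (h₂ := hT) hYne
      rw [hc, hadd] at hTT
      exact some_ne_zero _ hTT
    have he := hT.1
    rw [equation_iff, E2a1, E2a2, E2a3, E2a4, E2a6, hy0] at he
    have hcube : x * (x - N2) * (x - N2 * (u2 ^ 2 + 1)) = 0 := by linear_combination -he
    rcases mul_eq_zero.mp hcube with h12x | h3x
    · rcases mul_eq_zero.mp h12x with hx0 | hxN
      · -- T = (0, 0)
        rcases (by decide : ∀ a : ZMod 2, a = 0 ∨ a = 1) ((m' : ZMod 2)) with hpar | hpar
        · have hval : hom3 (m' • P) = 1 := by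
            rw [hc]
            show eps N2 0 (N2 * (u2 ^ 2 + 1)) chim (WeierstrassCurve.Affine.Point.some _ _ hT) = 1
            rw [eps_some, if_neg (by rw [hx0]; exact Ne.symm N2_ne), hx0]
            exact chim_negN2
          have hcontra := (hhomT hom3).symm.trans hval
          rw [hpar, zero_mul] at hcontra
          exact absurd hcontra (by decide)
        · have hval : hom1 (m' • P) = 0 := by
            rw [hc]
            show eps 0 N2 (N2 * (u2 ^ 2 + 1)) chic (WeierstrassCurve.Affine.Point.some _ _ hT) = 0
            rw [eps_some, if_pos hx0]
            exact chic_T0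
          have hcontra := (hhomT hom1).symm.trans hval
          rw [hpar, one_mul, h1P] at hcontra
          exact absurd hcontra (by decide)
      · -- T = (N, 0)
        have hx : x = N2 := sub_eq_zero.mp hxN
        have hval : hom2 (m' • P) = 1 := by
          rw [hc]
          show eps 0 N2 (N2 * (u2 ^ 2 + 1)) chim (WeierstrassCurve.Affine.Point.some _ _ hT) = 1
          rw [eps_some, if_neg (by rw [hx]; exact N2_ne), hx, sub_zero]
          exact chim_N2
        have hcontra := (hhomT hom2).symm.trans hval
        rw [h2P, mul_zero] at hcontra
        exact absurd hcontra (by decide)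
    · -- T = (N(u²+1), 0)
      have hx : x = N2 * (u2 ^ 2 + 1) := sub_eq_zero.mp h3x
      have hval : hom2 (m' • P) = 1 := by
        rw [hc]
        show eps 0 N2 (N2 * (u2 ^ 2 + 1)) chim (WeierstrassCurve.Affine.Point.some _ _ hT) = 1
        rw [eps_some, if_neg (by rw [hx]; exact N2w_ne), hx, sub_zero]
        exact chim_N2w
      have hcontra := (hhomT hom2).symm.trans hval
      rw [h2P, mul_zero] at hcontra
      exact absurd hcontra (by decide)

end Final

end HeronAux

/-- the point `P = ((m²+1)(m+u)², u²(m²+1)²(m+u)(mu−1))` is a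
`ℚ(m,u)`-rational point of `E : y² = x(x−N)(x−N(u²+1))`, where
`N = m(m²+1)(2u−m(u²−1))`, and `P` has infinite order. -/
theorem heron_angle_point_infinite_order :
    ∃ hP : E2.Nonsingular ((m2 ^ 2 + 1) * (m2 + u2) ^ 2)
      (u2 ^ 2 * (m2 ^ 2 + 1) ^ 2 * (m2 + u2) * (m2 * u2 - 1)),
      ∀ k : ℕ, 1 ≤ k → k • (WeierstrassCurve.Affine.Point.some _ _ hP) ≠ 0 := by
  have heq : E2.Equation ((m2 ^ 2 + 1) * (m2 + u2) ^ 2)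
      (u2 ^ 2 * (m2 ^ 2 + 1) ^ 2 * (m2 + u2) * (m2 * u2 - 1)) := by
    rw [WeierstrassCurve.Affine.equation_iff, HeronAux.E2a1, HeronAux.E2a2, HeronAux.E2a3,
      HeronAux.E2a4, HeronAux.E2a6, HeronAux.N2_unfold]
    ring
  have hns : E2.Nonsingular ((m2 ^ 2 + 1) * (m2 + u2) ^ 2)
      (u2 ^ 2 * (m2 ^ 2 + 1) ^ 2 * (m2 + u2) * (m2 * u2 - 1)) := by
    rw [WeierstrassCurve.Affine.nonsingular_iff]
    refine ⟨heq, Or.inr ?_⟩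
    rw [HeronAux.E2a1, HeronAux.E2a3]
    intro hcon
    apply HeronAux.yP_ne
    have h2y : (2 : K2) * (u2 ^ 2 * (m2 ^ 2 + 1) ^ 2 * (m2 + u2) * (m2 * u2 - 1)) = 0 := by
      linear_combination hcon
    exact (mul_eq_zero.mp h2y).resolve_left HeronAux.two_ne_K2
  exact ⟨hns, HeronAux.main_aux hns⟩
end
end

section
/- Let u, v, w, Δ be rational numbers with v ≠ 0, w ≠ 0, u ≠ vw, satisfying 4u²v²w²Δ² = (uv−w)(uw−v)(vw−u)(uvw−1). Define y = 2u(v²−1)(w²−1)(v²w²−1)Δ / (vw(u−vw)²) and x = (v²−1)(w²−1)(uvw−1) / (vw(vw−u)). Then y² = x(x−(v−v⁻¹)²)(x−(w−w⁻¹)²), i.e. (x,y) is a rational point on the side-parametrized Heron curve E_{v,w}. -/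
/-- a rational solution of the side-length Heron condition
`4u²v²w²Δ² = (uv−w)(uw−v)(vw−u)(uvw−1)` yields, via the change of variables, a
rational point on the side-parametrized Heron curve
`E_{v,w} : y² = x(x−(v−v⁻¹)²)(x−(w−w⁻¹)²)`. -/
theorem heron_side_to_curve (u v w Δ : ℚ) (hv : v ≠ 0) (hw : w ≠ 0)
    (huvw : u ≠ v * w)
    (hH : 4 * u ^ 2 * v ^ 2 * w ^ 2 * Δ ^ 2 =
      (u * v - w) * (u * w - v) * (v * w - u) * (u * v * w - 1))
    (x y : ℚ)
    (hy : y = 2 * u * (v ^ 2 - 1) * (w ^ 2 - 1) * (v ^ 2 * w ^ 2 - 1) * Δ /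
      (v * w * (u - v * w) ^ 2))
    (hx : x = (v ^ 2 - 1) * (w ^ 2 - 1) * (u * v * w - 1) /
      (v * w * (v * w - u))) :
    y ^ 2 = x * (x - (v - v⁻¹) ^ 2) * (x - (w - w⁻¹) ^ 2) := by
  have hsub : u - v * w ≠ 0 := sub_ne_zero.2 huvw
  have hsub' : v * w - u ≠ 0 := sub_ne_zero.2 (Ne.symm huvw)
  subst hx hy
  field_simp
  linear_combination (v^2-1)^2*(w^2-1)^2*(v^2*w^2-1)^2*(v*w-u)^3 * hH
end

section
/- There are no equilateral hyperbolic Heron triangles. Equivalently, in the algebraic form established by the paper: there exist no rational numbers c, s, d with c² + s² = 1, 1/2 < c < 1, s > 0, d > 0 and d² = (2c−1)(c+1)². -/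
/-! Helper arithmetic lemmas -/

private lemma sqmod8_odd (x : ℤ) (h : x % 2 = 1) : x ^ 2 % 8 = 1 := by
  obtain ⟨t, rfl⟩ : ∃ t, x = 2 * t + 1 := ⟨x / 2, by omega⟩
  obtain ⟨s, hs⟩ := Int.even_mul_succ_self t
  have hx2 : (2 * t + 1) ^ 2 = 8 * s + 1 := by linear_combination 4 * hs
  omega

private lemma sqmod16_odd (x : ℤ) (h : x % 2 = 1) : x ^ 2 % 16 = 1 ∨ x ^ 2 % 16 = 9 := by
  obtain ⟨t, rfl⟩ : ∃ t, x = 2 * t + 1 := ⟨x / 2, by omega⟩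
  obtain ⟨s, hs⟩ := Int.even_mul_succ_self t
  have hx2 : (2 * t + 1) ^ 2 = 8 * s + 1 := by linear_combination 4 * hs
  omega

private lemma sqmod8_cases (x : ℤ) : x ^ 2 % 8 = 0 ∨ x ^ 2 % 8 = 1 ∨ x ^ 2 % 8 = 4 := by
  rcases Int.even_or_odd x with ⟨t, rfl⟩ | ⟨t, rfl⟩
  · rcases Int.even_or_odd t with ⟨u, rfl⟩ | ⟨u, rfl⟩
    · obtain ⟨v, hv⟩ : ∃ v, (u + u + (u + u)) ^ 2 = 16 * v := ⟨u ^ 2, by ring⟩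
      omega
    · obtain ⟨s, hs⟩ := Int.even_mul_succ_self u
      have : (2 * u + 1 + (2 * u + 1)) ^ 2 = 32 * s + 4 := by linear_combination 16 * hs
      omega
  · have := sqmod8_odd (2 * t + 1) (by omega)
    omega

private lemma parity_sq (x : ℤ) : x ^ 2 % 2 = x % 2 := by
  rcases Int.even_or_odd x with ⟨t, rfl⟩ | ⟨t, rfl⟩
  · obtain ⟨v, hv⟩ : ∃ v, (t + t) ^ 2 = 2 * v := ⟨2 * t ^ 2, by ring⟩
    omega
  · have := sqmod8_odd (2 * t + 1) (by omega)
    omega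

private lemma sq3cases (x : ℤ) : (3 ∣ x ∧ x ^ 2 % 3 = 0) ∨ (¬ (3 ∣ x) ∧ x ^ 2 % 3 = 1) := by
  obtain ⟨t, ht⟩ : ∃ t, x = 3 * t + x % 3 := ⟨x / 3, by omega⟩
  have h3 : x % 3 = 0 ∨ x % 3 = 1 ∨ x % 3 = 2 := by omega
  rcases h3 with h | h | h
  · rw [h] at ht
    left
    constructor
    · exact ⟨t, by omega⟩
    · obtain ⟨v, hv⟩ : ∃ v, x ^ 2 = 3 * v := ⟨3 * t ^ 2, by rw [ht]; ring⟩
      omega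
  · rw [h] at ht
    right
    constructor
    · intro ⟨u, hu⟩; omega
    · obtain ⟨v, hv⟩ : ∃ v, x ^ 2 = 3 * v + 1 := ⟨3 * t ^ 2 + 2 * t, by rw [ht]; ring⟩
      omega
  · rw [h] at ht
    right
    constructor
    · intro ⟨u, hu⟩; omega
    · obtain ⟨v, hv⟩ : ∃ v, x ^ 2 = 3 * v + 1 := ⟨3 * t ^ 2 + 4 * t + 1, by rw [ht]; ring⟩
      omega

private lemma odd_mul_odd (x y : ℤ) (hx : x % 2 = 1) (hy : y % 2 = 1) : (x * y) % 2 = 1 := by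
  obtain ⟨t, rfl⟩ : ∃ t, x = 2 * t + 1 := ⟨x / 2, by omega⟩
  obtain ⟨u, rfl⟩ : ∃ u, y = 2 * u + 1 := ⟨y / 2, by omega⟩
  obtain ⟨v, hv⟩ : ∃ v, (2 * t + 1) * (2 * u + 1) = 2 * v + 1 := ⟨2 * t * u + t + u, by ring⟩
  omega

/-- coprimality descends to divisors -/
private lemma gcd_dvd_dvd {a b x y : ℤ} (hx : x ∣ a) (hy : y ∣ b) (h : Int.gcd a b = 1) :
    Int.gcd x y = 1 := by
  rw [← Int.isCoprime_iff_gcd_eq_one] at h ⊢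
  exact (h.of_isCoprime_of_dvd_left hx).of_isCoprime_of_dvd_right hy

private lemma not_both_dvd {a b x y p : ℤ} (hx : x ∣ a) (hy : y ∣ b) (h : Int.gcd a b = 1)
    (hp : 1 < p) : ¬ (p ∣ x ∧ p ∣ y) := by
  rintro ⟨h1, h2⟩
  have := gcd_dvd_dvd hx hy h
  rw [← Int.isCoprime_iff_gcd_eq_one] at this
  have := IsCoprime.isUnit_of_dvd' this h1 h2
  rw [Int.isUnit_iff] at this
  omega

/-- no solution to q² = 3p² with p ≠ 0 coprime -/
private lemma not_sq3 {p q : ℤ} (hp : p ≠ 0) (hcop : Int.gcd p q = 1) (h : q ^ 2 = 3 * p ^ 2) :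
    False := by
  rcases sq3cases q with ⟨⟨t, ht⟩, -⟩ | ⟨-, hq1⟩
  · -- 3 ∣ q, then 3 ∣ p
    have hp3 : 3 ∣ p := by
      rcases sq3cases p with ⟨h3p, -⟩ | ⟨-, hp1⟩
      · exact h3p
      · exfalso
        obtain ⟨v, hv⟩ : ∃ v, q ^ 2 = 9 * v := ⟨t ^ 2, by rw [ht]; ring⟩
        omega
    have := not_both_dvd (dvd_refl p) (dvd_refl q) hcop (by norm_num : (1:ℤ) < 3)
    exact this ⟨hp3, ⟨t, ht⟩⟩
  · rcases sq3cases p with ⟨⟨t, ht⟩, hp0⟩ | ⟨-, hp1⟩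
    · omega
    · omega

/-- extraction of common factor m -/
private lemma extract {a₁ b₂ A B : ℤ} (h : a₁ ^ 2 * B = b₂ ^ 2 * A) (hA : 0 < A) (hB : 0 < B)
    (ha₁ : 0 < a₁) (hcop : Int.gcd a₁ b₂ = 1) :
    ∃ m : ℤ, 0 < m ∧ A = m * a₁ ^ 2 ∧ B = m * b₂ ^ 2 := by
  have hc : IsCoprime (a₁ ^ 2) (b₂ ^ 2) :=
    (Int.isCoprime_iff_gcd_eq_one.mpr hcop).pow
  have hdvd : a₁ ^ 2 ∣ A := by
    have : a₁ ^ 2 ∣ b₂ ^ 2 * A := ⟨B, by linarith⟩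
    exact (IsCoprime.dvd_of_dvd_mul_left hc this)
  obtain ⟨m, hm⟩ := hdvd
  refine ⟨m, ?_, by linarith [hm], ?_⟩
  · nlinarith [sq_nonneg a₁]
  · have h2 : a₁ ^ 2 * B = a₁ ^ 2 * (m * b₂ ^ 2) := by rw [hm] at h; ring_nf; ring_nf at h; linarith
    have ha2 : (a₁ : ℤ) ^ 2 ≠ 0 := by positivity
    exact mul_left_cancel₀ ha2 h2

/-- positive square from coprime product -/
private lemma sq_of_coprime_pos {a b c : ℤ} (h : IsCoprime a b) (heq : a * b = c ^ 2)
    (hpos : 0 < a) : ∃ r : ℤ, 0 < r ∧ a = r ^ 2 := by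
  obtain ⟨a0, ha0 | ha0⟩ := Int.sq_of_isCoprime h heq
  · refine ⟨|a0|, ?_, by rw [sq_abs]; exact ha0⟩
    rcases eq_or_ne a0 0 with rfl | hne
    · simp at ha0; omega
    · positivity
  · nlinarith [sq_nonneg a0]

/-- positive primitive Pythagorean parametrization, x odd -/
private lemma pyth_param {x y z : ℤ} (hy : 0 < y) (hz : 0 < z)
    (hxodd : x % 2 = 1) (hcop : Int.gcd x y = 1) (h : x ^ 2 + y ^ 2 = z ^ 2) :
    ∃ a b : ℤ, 0 < a ∧ 0 < b ∧ Int.gcd a b = 1 ∧ (a % 2 + b % 2 = 1) ∧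
      x = a ^ 2 - b ^ 2 ∧ y = 2 * a * b ∧ z = a ^ 2 + b ^ 2 := by
  have ht : PythagoreanTriple x y z := by
    show x * x + y * y = z * z
    linear_combination h
  obtain ⟨m, n, hx, hy', hz', hmn, hpar, hm0⟩ := ht.coprime_classification' hcop hxodd hz
  have hmn0 : 0 < m * n := by nlinarith
  refine ⟨|m|, |n|, ?_, ?_, ?_, ?_, ?_, ?_, ?_⟩
  · rcases abs_pos.mpr (show m ≠ 0 by rintro rfl; simp at hmn0) with h'; exact h'
  · rcases abs_pos.mpr (show n ≠ 0 by rintro rfl; simp at hmn0) with h'; exact h'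
  · simpa [Int.gcd, Int.natAbs_abs] using hmn
  · have h2 : (2:ℤ) ∣ m ↔ (2:ℤ) ∣ |m| := (dvd_abs 2 m).symm
    have h3 : (2:ℤ) ∣ n ↔ (2:ℤ) ∣ |n| := (dvd_abs 2 n).symm
    omega
  · rw [hx, sq_abs, sq_abs]
  · rw [hy']
    have : |m| * |n| = m * n := by rw [← abs_mul]; exact abs_of_pos hmn0
    linarith
  · rw [hz', sq_abs, sq_abs]

/-- four number lemma (Euler), in ℕ -/
private lemma four_number_nat (a b c d : ℕ) (hc : 0 < c)
    (hab : Nat.Coprime a b) (h : a * b = c * d) :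
    ∃ a₁ a₂ b₁ b₂ : ℕ, a = a₁ * a₂ ∧ b = b₁ * b₂ ∧ c = a₁ * b₁ ∧ d = a₂ * b₂ := by
  set a₁ := Nat.gcd a c with ha₁
  set b₁ := Nat.gcd b c with hb₁
  have hcdvd : c ∣ a * b := ⟨d, h⟩
  have hc1 : c ∣ a₁ * b₁ := by
    have e : Nat.gcd c (a * b) = c := Nat.gcd_eq_left hcdvd
    calc c = Nat.gcd c (a * b) := e.symm
    _ ∣ Nat.gcd c a * Nat.gcd c b := Nat.gcd_mul_right_dvd_mul_gcd c a b
    _ = a₁ * b₁ := by rw [ha₁, hb₁, Nat.gcd_comm c a, Nat.gcd_comm c b]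
  have hc2 : a₁ * b₁ ∣ c := by
    apply Nat.Coprime.mul_dvd_of_dvd_of_dvd
    · exact Nat.Coprime.coprime_dvd_left (Nat.gcd_dvd_left a c)
        (Nat.Coprime.coprime_dvd_right (Nat.gcd_dvd_left b c) hab)
    · exact Nat.gcd_dvd_right a c
    · exact Nat.gcd_dvd_right b c
  have hceq : c = a₁ * b₁ := Nat.dvd_antisymm hc1 hc2
  obtain ⟨a₂, ha₂⟩ : a₁ ∣ a := Nat.gcd_dvd_left a c
  obtain ⟨b₂, hb₂⟩ : b₁ ∣ b := Nat.gcd_dvd_left b c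
  refine ⟨a₁, a₂, b₁, b₂, ha₂, hb₂, hceq, ?_⟩
  have : c * d = c * (a₂ * b₂) := by
    rw [← h, ha₂, hb₂, hceq]; ring
  exact Nat.eq_of_mul_eq_mul_left hc this

/-- four number lemma in ℤ, positive version -/
private lemma four_number {a b c d : ℤ} (ha : 0 < a) (hb : 0 < b) (hc : 0 < c) (hd : 0 < d)
    (hab : Int.gcd a b = 1) (h : a * b = c * d) :
    ∃ a₁ a₂ b₁ b₂ : ℤ, 0 < a₁ ∧ 0 < a₂ ∧ 0 < b₁ ∧ 0 < b₂ ∧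
      a = a₁ * a₂ ∧ b = b₁ * b₂ ∧ c = a₁ * b₁ ∧ d = a₂ * b₂ := by
  obtain ⟨A₁, A₂, B₁, B₂, h1, h2, h3, h4⟩ := four_number_nat a.natAbs b.natAbs c.natAbs d.natAbs
    (by omega) hab (by
      have := congrArg Int.natAbs h
      rwa [Int.natAbs_mul, Int.natAbs_mul] at this)
  have e1 : a = (A₁ : ℤ) * A₂ := by
    have : (a.natAbs : ℤ) = (A₁ : ℤ) * (A₂ : ℤ) := by exact_mod_cast congrArg Nat.cast h1
    omega
  have e2 : b = (B₁ : ℤ) * B₂ := by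
    have : (b.natAbs : ℤ) = (B₁ : ℤ) * (B₂ : ℤ) := by exact_mod_cast congrArg Nat.cast h2
    omega
  have e3 : c = (A₁ : ℤ) * B₁ := by
    have : (c.natAbs : ℤ) = (A₁ : ℤ) * (B₁ : ℤ) := by exact_mod_cast congrArg Nat.cast h3
    omega
  have e4 : d = (A₂ : ℤ) * B₂ := by
    have : (d.natAbs : ℤ) = (A₂ : ℤ) * (B₂ : ℤ) := by exact_mod_cast congrArg Nat.cast h4
    omega
  refine ⟨A₁, A₂, B₁, B₂, ?_, ?_, ?_, ?_, e1, e2, e3, e4⟩ <;> nlinarith [Int.ofNat_nonneg A₁,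
    Int.ofNat_nonneg A₂, Int.ofNat_nonneg B₁, Int.ofNat_nonneg B₂]


/-- core of case j even: all m cases force all four numbers odd -/
private lemma core_d {a₁ a₂ b₁ b₂ : ℤ} (h1 : 0 < a₁) (h2 : 0 < a₂) (h3 : 0 < b₁) (h4 : 0 < b₂)
    (g12 : Int.gcd a₁ b₂ = 1) (g21 : Int.gcd a₂ b₁ = 1) (gaa : Int.gcd a₁ a₂ = 1)
    (heq : a₁ ^ 2 * (3 * a₂ ^ 2 - b₁ ^ 2) = b₂ ^ 2 * (3 * b₁ ^ 2 - a₂ ^ 2)) :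
    a₁ % 2 = 1 ∧ a₂ % 2 = 1 ∧ b₁ % 2 = 1 ∧ b₂ % 2 = 1 := by
  have hB : 0 < 3 * a₂ ^ 2 - b₁ ^ 2 := by
    by_contra hx
    push_neg at hx
    have hA : 0 < 3 * b₁ ^ 2 - a₂ ^ 2 := by nlinarith
    nlinarith [sq_nonneg a₁, sq_nonneg b₂, mul_pos h4 h4]
  have hA : 0 < 3 * b₁ ^ 2 - a₂ ^ 2 := by nlinarith [sq_nonneg b₂, mul_pos h1 h1]
  obtain ⟨m, hm0, hmA, hmB⟩ := extract heq hA hB h1 g12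
  -- m ∣ 8
  obtain ⟨u, v, huv⟩ : IsCoprime (a₂ ^ 2) (b₁ ^ 2) :=
    (Int.isCoprime_iff_gcd_eq_one.mpr g21).pow
  have e2 : 8 * a₂ ^ 2 = m * (a₁ ^ 2 + 3 * b₂ ^ 2) := by linear_combination hmA + 3 * hmB
  have e3 : 8 * b₁ ^ 2 = m * (3 * a₁ ^ 2 + b₂ ^ 2) := by linear_combination 3 * hmA + hmB
  have hm8 : m ∣ 8 := by
    have e : (8 : ℤ) = u * (8 * a₂ ^ 2) + v * (8 * b₁ ^ 2) := by linear_combination (-8) * huv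
    rw [e, e2, e3]
    exact dvd_add ⟨u * (a₁ ^ 2 + 3 * b₂ ^ 2), by ring⟩ ⟨v * (3 * a₁ ^ 2 + b₂ ^ 2), by ring⟩
  have hm_le : m ≤ 8 := Int.le_of_dvd (by norm_num) hm8
  have nb21 : ¬ ((2:ℤ) ∣ a₂ ∧ (2:ℤ) ∣ b₁) :=
    not_both_dvd (dvd_refl a₂) (dvd_refl b₁) g21 (by norm_num)
  have nbaa : ¬ ((3:ℤ) ∣ a₁ ∧ (3:ℤ) ∣ a₂) :=
    not_both_dvd (dvd_refl a₁) (dvd_refl a₂) gaa (by norm_num)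
  interval_cases m
  -- m = 1
  · exfalso
    rcases sq3cases a₁ with ⟨d1, e1⟩ | ⟨d1, e1⟩ <;>
      rcases sq3cases a₂ with ⟨d2, f2⟩ | ⟨d2, f2⟩ <;>
      rcases sq3cases b₁ with ⟨-, f3⟩ | ⟨-, f3⟩ <;>
      first
        | exact nbaa ⟨d1, d2⟩
        | (generalize a₁ ^ 2 = X at hmA e1
           generalize a₂ ^ 2 = Z at hmA f2
           generalize b₁ ^ 2 = Y at hmA f3
           omega)
  -- m = 2
  · have hob : a₂ % 2 = 1 ∧ b₁ % 2 = 1 := by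
      have p2 := parity_sq a₂
      have p3 := parity_sq b₁
      generalize a₁ ^ 2 = X at hmA
      generalize a₂ ^ 2 = Z at hmA p2
      generalize b₁ ^ 2 = Y at hmA p3
      omega
    have s2 := sqmod8_odd a₂ hob.1
    have s3 := sqmod8_odd b₁ hob.2
    have pa1 : a₁ % 2 = 1 := by
      have p1 := parity_sq a₁
      generalize a₁ ^ 2 = X at hmA p1
      generalize a₂ ^ 2 = Z at hmA s2
      generalize b₁ ^ 2 = Y at hmA s3
      omega
    have pb2 : b₂ % 2 = 1 := by
      have p4 := parity_sq b₂
      generalize b₂ ^ 2 = W at hmB p4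
      generalize a₂ ^ 2 = Z at hmB s2
      generalize b₁ ^ 2 = Y at hmB s3
      omega
    exact ⟨pa1, hob.1, hob.2, pb2⟩
  -- m = 3
  · exfalso; norm_num at hm8
  -- m = 4
  · exfalso
    rcases sq3cases a₁ with ⟨d1, e1⟩ | ⟨d1, e1⟩ <;>
      rcases sq3cases a₂ with ⟨d2, f2⟩ | ⟨d2, f2⟩ <;>
      rcases sq3cases b₁ with ⟨-, f3⟩ | ⟨-, f3⟩ <;>
      first
        | exact nbaa ⟨d1, d2⟩
        | (generalize a₁ ^ 2 = X at hmA e1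
           generalize a₂ ^ 2 = Z at hmA f2
           generalize b₁ ^ 2 = Y at hmA f3
           omega)
  -- m = 5
  · exfalso; norm_num at hm8
  -- m = 6
  · exfalso; norm_num at hm8
  -- m = 7
  · exfalso; norm_num at hm8
  -- m = 8
  · exfalso
    have hob : a₂ % 2 = 1 ∧ b₁ % 2 = 1 := by
      have p2 := parity_sq a₂
      have p3 := parity_sq b₁
      generalize a₁ ^ 2 = X at hmA
      generalize a₂ ^ 2 = Z at hmA p2
      generalize b₁ ^ 2 = Y at hmA p3
      omega
    have s2 := sqmod8_odd a₂ hob.1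
    have s3 := sqmod8_odd b₁ hob.2
    generalize a₁ ^ 2 = X at hmA
    generalize a₂ ^ 2 = Z at hmA s2
    generalize b₁ ^ 2 = Y at hmA s3
    omega

/-- core of case i even: either contradiction or descent data -/
private lemma core_e {a₁ a₂ b₁ b₂ : ℤ} (h1 : 0 < a₁) (h2 : 0 < a₂) (h3 : 0 < b₁) (h4 : 0 < b₂)
    (g12 : Int.gcd a₁ b₂ = 1) (g21 : Int.gcd a₂ b₁ = 1) (g22 : Int.gcd a₂ b₂ = 1)
    (heq : a₁ ^ 2 * (9 * b₁ ^ 2 - a₂ ^ 2) = b₂ ^ 2 * (a₂ ^ 2 - b₁ ^ 2)) :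
    3 ∣ a₁ ∧ a₁ ^ 2 + b₂ ^ 2 = b₁ ^ 2 ∧ 9 * a₁ ^ 2 + b₂ ^ 2 = a₂ ^ 2 := by
  have hB : 0 < 9 * b₁ ^ 2 - a₂ ^ 2 := by
    by_contra hx
    push_neg at hx
    have hA : 0 < a₂ ^ 2 - b₁ ^ 2 := by nlinarith
    nlinarith [sq_nonneg a₁, sq_nonneg b₂, mul_pos h4 h4]
  have hA : 0 < a₂ ^ 2 - b₁ ^ 2 := by nlinarith [sq_nonneg b₂, mul_pos h1 h1]
  obtain ⟨m, hm0, hmA, hmB⟩ := extract heq hA hB h1 g12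
  obtain ⟨u, v, huv⟩ : IsCoprime (a₂ ^ 2) (b₁ ^ 2) :=
    (Int.isCoprime_iff_gcd_eq_one.mpr g21).pow
  have e2 : 8 * a₂ ^ 2 = m * (9 * a₁ ^ 2 + b₂ ^ 2) := by linear_combination 9 * hmA + hmB
  have e3 : 8 * b₁ ^ 2 = m * (a₁ ^ 2 + b₂ ^ 2) := by linear_combination hmA + hmB
  have hm8 : m ∣ 8 := by
    have e : (8 : ℤ) = u * (8 * a₂ ^ 2) + v * (8 * b₁ ^ 2) := by linear_combination (-8) * huv
    rw [e, e2, e3]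
    exact dvd_add ⟨u * (9 * a₁ ^ 2 + b₂ ^ 2), by ring⟩ ⟨v * (a₁ ^ 2 + b₂ ^ 2), by ring⟩
  have hm_le : m ≤ 8 := Int.le_of_dvd (by norm_num) hm8
  have nb21 : ¬ ((2:ℤ) ∣ a₂ ∧ (2:ℤ) ∣ b₁) :=
    not_both_dvd (dvd_refl a₂) (dvd_refl b₁) g21 (by norm_num)
  have nb22 : ¬ ((3:ℤ) ∣ a₂ ∧ (3:ℤ) ∣ b₂) :=
    not_both_dvd (dvd_refl a₂) (dvd_refl b₂) g22 (by norm_num)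
  have nb12 : ¬ ((2:ℤ) ∣ a₁ ∧ (2:ℤ) ∣ b₂) :=
    not_both_dvd (dvd_refl a₁) (dvd_refl b₂) g12 (by norm_num)
  interval_cases m
  -- m = 1 : mod 3 contradiction via hmB
  · exfalso
    rcases sq3cases a₂ with ⟨d2, f2⟩ | ⟨d2, f2⟩ <;>
      rcases sq3cases b₂ with ⟨d4, f4⟩ | ⟨d4, f4⟩ <;>
      first
        | exact nb22 ⟨d2, d4⟩
        | (generalize a₂ ^ 2 = Z at hmB f2
           generalize b₂ ^ 2 = W at hmB f4
           generalize b₁ ^ 2 = Y at hmB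
           omega)
  -- m = 2
  · exfalso
    have hob : a₂ % 2 = 1 ∧ b₁ % 2 = 1 := by
      have p2 := parity_sq a₂
      have p3 := parity_sq b₁
      generalize a₁ ^ 2 = X at hmA
      generalize a₂ ^ 2 = Z at hmA p2
      generalize b₁ ^ 2 = Y at hmA p3
      omega
    have s2 := sqmod8_odd a₂ hob.1
    have s3 := sqmod8_odd b₁ hob.2
    have pa1 : a₁ % 2 = 0 := by
      have p1 := parity_sq a₁
      generalize a₁ ^ 2 = X at hmA p1
      generalize a₂ ^ 2 = Z at hmA s2
      generalize b₁ ^ 2 = Y at hmA s3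
      omega
    have pb2 : b₂ % 2 = 1 := by omega
    have t2 := sqmod16_odd a₂ hob.1
    have t3 := sqmod16_odd b₁ hob.2
    have t4 := sqmod16_odd b₂ pb2
    generalize a₂ ^ 2 = Z at hmB t2
    generalize b₁ ^ 2 = Y at hmB t3
    generalize b₂ ^ 2 = W at hmB t4
    omega
  · exfalso; norm_num at hm8
  -- m = 4
  · exfalso
    rcases sq3cases a₂ with ⟨d2, f2⟩ | ⟨d2, f2⟩ <;>
      rcases sq3cases b₂ with ⟨d4, f4⟩ | ⟨d4, f4⟩ <;>
      first
        | exact nb22 ⟨d2, d4⟩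
        | (generalize a₂ ^ 2 = Z at hmB f2
           generalize b₂ ^ 2 = W at hmB f4
           generalize b₁ ^ 2 = Y at hmB
           omega)
  · exfalso; norm_num at hm8
  · exfalso; norm_num at hm8
  · exfalso; norm_num at hm8
  -- m = 8 : descent
  · have h3a1 : 3 ∣ a₁ := by
      rcases sq3cases a₁ with ⟨d1, -⟩ | ⟨d1, e1⟩
      · exact d1
      · exfalso
        rcases sq3cases a₂ with ⟨d2, f2⟩ | ⟨d2, f2⟩ <;>
          rcases sq3cases b₂ with ⟨d4, f4⟩ | ⟨d4, f4⟩ <;>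
          rcases sq3cases b₁ with ⟨-, f3⟩ | ⟨-, f3⟩ <;>
          first
            | exact nb22 ⟨d2, d4⟩
            | (generalize a₁ ^ 2 = X at hmA e1
               generalize a₂ ^ 2 = Z at hmA hmB f2
               generalize b₂ ^ 2 = W at hmB f4
               generalize b₁ ^ 2 = Y at hmA hmB f3
               omega)
    refine ⟨h3a1, ?_, ?_⟩
    · generalize a₁ ^ 2 = X at hmA ⊢
      generalize a₂ ^ 2 = Z at hmA hmB
      generalize b₂ ^ 2 = W at hmB ⊢
      generalize b₁ ^ 2 = Y at hmA hmB ⊢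
      omega
    · generalize a₁ ^ 2 = X at hmA ⊢
      generalize a₂ ^ 2 = Z at hmA hmB ⊢
      generalize b₂ ^ 2 = W at hmB ⊢
      generalize b₁ ^ 2 = Y at hmA hmB
      omega


/-- No positive coprime solution to i²+j²=k², 9i²+j²=l² with 3 ∣ i. -/
private lemma lemT : ∀ N : ℕ, ∀ i j k l : ℤ, k.natAbs = N → 0 < i → 0 < j → 0 < k → 0 < l →
    Int.gcd i j = 1 → 3 ∣ i → i ^ 2 + j ^ 2 = k ^ 2 → 9 * i ^ 2 + j ^ 2 = l ^ 2 → False := by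
  intro N
  induction N using Nat.strong_induction_on with
  | _ N IH =>
  intro i j k l hkN hi hj hk hl hcop h3i h1 h2
  have h3j : ¬ (3:ℤ) ∣ j := fun hd =>
    not_both_dvd (dvd_refl i) (dvd_refl j) hcop (by norm_num) ⟨h3i, hd⟩
  have hne : ¬ ((2:ℤ) ∣ i ∧ (2:ℤ) ∣ j) :=
    not_both_dvd (dvd_refl i) (dvd_refl j) hcop (by norm_num)
  have hpar : i % 2 + j % 2 = 1 := by
    by_contra hcon
    have hii : i % 2 = 1 ∧ j % 2 = 1 := by omega
    have s1 := sqmod8_odd i hii.1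
    have s2 := sqmod8_odd j hii.2
    have c1 := sqmod8_cases k
    generalize i ^ 2 = X at s1 h1
    generalize j ^ 2 = Y at s2 h1
    generalize k ^ 2 = Z at c1 h1
    omega
  rcases (by omega : i % 2 = 1 ∧ j % 2 = 0 ∨ i % 2 = 0 ∧ j % 2 = 1) with ⟨hmi, hmj⟩ | ⟨hmi, hmj⟩
  · -- case d : i odd, j even
    have g3 : Int.gcd (3 * i) j = 1 := by
      have h3jn : ¬ ((3:ℤ).natAbs ∣ j.natAbs) := by
        rw [Int.natAbs_dvd_natAbs]; exact h3j
      have : (3 * i).natAbs = 3 * i.natAbs := by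
        rw [Int.natAbs_mul]; norm_num
      show Nat.gcd (3 * i).natAbs j.natAbs = 1
      rw [this]
      exact Nat.Coprime.mul ((Nat.Prime.coprime_iff_not_dvd (by norm_num)).mpr h3jn) hcop
    have h2' : (3 * i) ^ 2 + j ^ 2 = l ^ 2 := by linear_combination h2
    obtain ⟨a, b, ha, hb, gab, pab, hxa, hya, hza⟩ := pyth_param hj hk hmi hcop h1
    obtain ⟨c, d, hc, hd, gcd2, pcd, hxc, hyc, hzc⟩ :=
      pyth_param hj hl (by omega : (3 * i) % 2 = 1) g3 h2'
    have hcd : a * b = c * d := by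
      have h' : 2 * (a * b) = 2 * (c * d) := by linear_combination hyc - hya
      linarith
    obtain ⟨a₁, a₂, b₁, b₂, p1, p2, p3, p4, ea, eb, ec, ed⟩ :=
      four_number ha hb hc hd gab hcd
    subst ea eb ec ed
    have g12 : Int.gcd a₁ b₂ = 1 :=
      gcd_dvd_dvd (dvd_mul_right a₁ a₂) (dvd_mul_left b₂ b₁) gab
    have g21 : Int.gcd a₂ b₁ = 1 :=
      gcd_dvd_dvd (dvd_mul_left a₂ a₁) (dvd_mul_right b₁ b₂) gab
    have gaa : Int.gcd a₁ a₂ = 1 :=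
      gcd_dvd_dvd (dvd_mul_right a₁ b₁) (dvd_mul_right a₂ b₂) gcd2
    have heq : a₁ ^ 2 * (3 * a₂ ^ 2 - b₁ ^ 2) = b₂ ^ 2 * (3 * b₁ ^ 2 - a₂ ^ 2) := by
      linear_combination hxc - 3 * hxa
    obtain ⟨q1, q2, q3, q4⟩ := core_d p1 p2 p3 p4 g12 g21 gaa heq
    have o1 : (a₁ * a₂) % 2 = 1 := odd_mul_odd _ _ q1 q2
    have o2 : (b₁ * b₂) % 2 = 1 := odd_mul_odd _ _ q3 q4
    omega
  · -- case e : i even, j odd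
    have hcop' : Int.gcd j i = 1 := by rwa [Int.gcd_comm]
    have g3 : Int.gcd j (3 * i) = 1 := by
      rw [Int.gcd_comm]
      have h3jn : ¬ ((3:ℤ).natAbs ∣ j.natAbs) := by
        rw [Int.natAbs_dvd_natAbs]; exact h3j
      have : (3 * i).natAbs = 3 * i.natAbs := by rw [Int.natAbs_mul]; norm_num
      show Nat.gcd (3 * i).natAbs j.natAbs = 1
      rw [this]
      exact Nat.Coprime.mul ((Nat.Prime.coprime_iff_not_dvd (by norm_num)).mpr h3jn) hcop
    have h1' : j ^ 2 + i ^ 2 = k ^ 2 := by linear_combination h1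
    have h2' : j ^ 2 + (3 * i) ^ 2 = l ^ 2 := by linear_combination h2
    obtain ⟨a, b, ha, hb, gab, pab, hxa, hya, hza⟩ := pyth_param hi hk hmj hcop' h1'
    obtain ⟨c, d, hc, hd, gcd2, pcd, hxc, hyc, hzc⟩ :=
      pyth_param (by linarith : (0:ℤ) < 3 * i) hl hmj g3 h2'
    have hcd : c * d = 3 * (a * b) := by
      have h' : 2 * (c * d) = 2 * (3 * (a * b)) := by linear_combination 3 * hya - hyc
      linarith
    have h3cd : (3:ℤ) ∣ c * d := ⟨a * b, hcd⟩
    rcases Int.prime_three.dvd_mul.mp h3cd with h3c | h3d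
    · -- e1 : 3 ∣ c
      obtain ⟨c₀, rfl⟩ := h3c
      have hc₀ : 0 < c₀ := by omega
      have gcd₀ : Int.gcd c₀ d = 1 := gcd_dvd_dvd (dvd_mul_left c₀ 3) (dvd_refl d) gcd2
      have hcd₀ : a * b = c₀ * d := by
        have h' : 3 * (c₀ * d) = 3 * (a * b) := by linear_combination hcd
        linarith
      obtain ⟨a₁, a₂, b₁, b₂, p1, p2, p3, p4, ea, eb, ec, ed⟩ :=
        four_number ha hb hc₀ hd gab hcd₀
      subst ea eb ec ed
      have g12 : Int.gcd a₁ b₂ = 1 :=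
        gcd_dvd_dvd (dvd_mul_right a₁ a₂) (dvd_mul_left b₂ b₁) gab
      have g21 : Int.gcd a₂ b₁ = 1 :=
        gcd_dvd_dvd (dvd_mul_left a₂ a₁) (dvd_mul_right b₁ b₂) gab
      have g22 : Int.gcd a₂ b₂ = 1 :=
        gcd_dvd_dvd (dvd_mul_left a₂ a₁) (dvd_mul_left b₂ b₁) gab
      have heq : a₁ ^ 2 * (9 * b₁ ^ 2 - a₂ ^ 2) = b₂ ^ 2 * (a₂ ^ 2 - b₁ ^ 2) := by
        linear_combination hxa - hxc
      obtain ⟨h3a₁, hE1, hE2⟩ := core_e p1 p2 p3 p4 g12 g21 g22 heq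
      have e1' : 1 ≤ a₁ * a₂ := by linarith [Int.lt_iff_add_one_le.mp (mul_pos p1 p2)]
      have e2' : 1 ≤ b₁ * b₂ := by linarith [Int.lt_iff_add_one_le.mp (mul_pos p3 p4)]
      have e3' : b₁ ≤ b₁ * b₂ := le_mul_of_one_le_right (le_of_lt p3) (by omega)
      have s1 : 1 ≤ (a₁ * a₂) ^ 2 := by linarith [e1', sq_nonneg (a₁ * a₂ - 1)]
      have s2 : b₁ * b₂ ≤ (b₁ * b₂) ^ 2 := by linarith [e2', sq_nonneg (b₁ * b₂ - 1)]
      have hblt : b₁ < k := by rw [hza]; linarith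
      have hlt : b₁.natAbs < N := by omega
      exact IH _ hlt a₁ b₂ b₁ a₂ rfl p1 p4 p3 p2 g12 h3a₁ hE1 hE2
    · -- e2 : 3 ∣ d
      obtain ⟨d₀, rfl⟩ := h3d
      have hd₀ : 0 < d₀ := by omega
      have gcdd : Int.gcd c d₀ = 1 := gcd_dvd_dvd (dvd_refl c) (dvd_mul_left d₀ 3) gcd2
      have hcd₀ : a * b = c * d₀ := by
        have h' : 3 * (c * d₀) = 3 * (a * b) := by linear_combination hcd
        linarith
      obtain ⟨a₁, a₂, b₁, b₂, p1, p2, p3, p4, ea, eb, ec, ed⟩ :=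
        four_number ha hb hc hd₀ gab hcd₀
      subst ea eb ec ed
      have gab' : Int.gcd (b₁ * b₂) (a₁ * a₂) = 1 := by rwa [Int.gcd_comm]
      have g12 : Int.gcd b₂ a₁ = 1 :=
        gcd_dvd_dvd (dvd_mul_left b₂ b₁) (dvd_mul_right a₁ a₂) gab'
      have g21 : Int.gcd b₁ a₂ = 1 :=
        gcd_dvd_dvd (dvd_mul_right b₁ b₂) (dvd_mul_left a₂ a₁) gab'
      have g22 : Int.gcd b₁ a₁ = 1 :=
        gcd_dvd_dvd (dvd_mul_right b₁ b₂) (dvd_mul_right a₁ a₂) gab'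
      have heq : b₂ ^ 2 * (9 * a₂ ^ 2 - b₁ ^ 2) = a₁ ^ 2 * (b₁ ^ 2 - a₂ ^ 2) := by
        linear_combination hxc - hxa
      obtain ⟨h3b₂, hE1, hE2⟩ := core_e p4 p3 p2 p1 g12 g21 g22 heq
      have e1' : 1 ≤ b₁ * b₂ := by linarith [Int.lt_iff_add_one_le.mp (mul_pos p3 p4)]
      have e2' : 1 ≤ a₁ * a₂ := by linarith [Int.lt_iff_add_one_le.mp (mul_pos p1 p2)]
      have e3' : a₂ ≤ a₁ * a₂ := le_mul_of_one_le_left (le_of_lt p2) (by omega)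
      have s1 : 1 ≤ (b₁ * b₂) ^ 2 := by linarith [e1', sq_nonneg (b₁ * b₂ - 1)]
      have s2 : a₁ * a₂ ≤ (a₁ * a₂) ^ 2 := by linarith [e2', sq_nonneg (a₁ * a₂ - 1)]
      have halt : a₂ < k := by rw [hza]; linarith
      have hlt : a₂.natAbs < N := by omega
      exact IH _ hlt b₂ a₁ a₂ b₁ rfl p4 p1 p2 p3 g12 h3b₂ hE1 hE2

/-- if every common divisor of A,B divides 8 and one of A,B is odd, they are coprime -/
private lemma coprime_of_odd_dvd8 {A B : ℤ} (h0 : A ≠ 0 ∨ B ≠ 0)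
    (hodd : ¬ ((2:ℤ) ∣ A) ∨ ¬ ((2:ℤ) ∣ B))
    (h8 : ∀ g : ℤ, 0 < g → g ∣ A → g ∣ B → g ∣ 8) : IsCoprime A B := by
  rw [Int.isCoprime_iff_gcd_eq_one]
  have hne : Int.gcd A B ≠ 0 := by
    rw [Ne, Int.gcd_eq_zero_iff]
    rcases h0 with h | h
    · exact fun hc => h hc.1
    · exact fun hc => h hc.2
  set n := Int.gcd A B with hn
  have h1 : (n:ℤ) ∣ A := Int.gcd_dvd_left A B
  have h2 : (n:ℤ) ∣ B := Int.gcd_dvd_right A B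
  have h3 : (n:ℤ) ∣ 8 := h8 _ (by exact_mod_cast Nat.pos_of_ne_zero hne) h1 h2
  have h3' : n ∣ 8 := by exact_mod_cast h3
  have h4 : ¬ 2 ∣ n := by
    intro hd
    have hd' : (2:ℤ) ∣ (n:ℤ) := by exact_mod_cast hd
    rcases hodd with h | h
    · exact h (dvd_trans hd' h1)
    · exact h (dvd_trans hd' h2)
  have h5 : n ≤ 8 := Nat.le_of_dvd (by norm_num) h3'
  interval_cases n <;> first | rfl | (exfalso; revert h3' h4; decide)


/-- the two factors are coprime; both squares; apply the descent lemma -/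
private lemma finisher1 {i j v : ℤ} (hi : 0 < i) (hj : 0 < j) (hg : Int.gcd i j = 1)
    (h3i : 3 ∣ i) (hodd : (i ^ 2 + j ^ 2) % 2 = 1)
    (hId : (9 * i ^ 2 + j ^ 2) * (i ^ 2 + j ^ 2) = v ^ 2) : False := by
  obtain ⟨x, y, hxy⟩ : IsCoprime (i ^ 2) (j ^ 2) := (Int.isCoprime_iff_gcd_eq_one.mpr hg).pow
  have hcopF : IsCoprime (9 * i ^ 2 + j ^ 2) (i ^ 2 + j ^ 2) := by
    apply coprime_of_odd_dvd8
    · left; positivity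
    · right; omega
    · intro g hg0 hg1 hg2
      have d1 : g ∣ 8 * i ^ 2 := by
        have e : 8 * i ^ 2 = (9 * i ^ 2 + j ^ 2) - (i ^ 2 + j ^ 2) := by ring
        rw [e]; exact dvd_sub hg1 hg2
      have d2 : g ∣ 8 * j ^ 2 := by
        have e : 8 * j ^ 2 = 9 * (i ^ 2 + j ^ 2) - (9 * i ^ 2 + j ^ 2) := by ring
        rw [e]; exact dvd_sub (hg2.mul_left 9) hg1
      have e : (8:ℤ) = x * (8 * i ^ 2) + y * (8 * j ^ 2) := by linear_combination (-8) * hxy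
      rw [e]; exact dvd_add (d1.mul_left x) (d2.mul_left y)
  obtain ⟨l, hl, hleq⟩ := sq_of_coprime_pos hcopF hId (by positivity)
  have hId2 : (i ^ 2 + j ^ 2) * (9 * i ^ 2 + j ^ 2) = v ^ 2 := by linear_combination hId
  obtain ⟨k, hk, hkeq⟩ := sq_of_coprime_pos hcopF.symm hId2 (by positivity)
  exact lemT k.natAbs i j k l rfl hi hj hk hl hg h3i hkeq hleq

/-- odd case finisher : i²+j² = 2b² is impossible mod 3 -/
private lemma finisher2 {i j v : ℤ} (hi : 0 < i) (hj : 0 < j) (hg : Int.gcd i j = 1)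
    (h3i : 3 ∣ i) (hio : i % 2 = 1) (hjo : j % 2 = 1)
    (hId : (9 * i ^ 2 + j ^ 2) * (i ^ 2 + j ^ 2) = 4 * v ^ 2) : False := by
  obtain ⟨x, y, hxy⟩ : IsCoprime (i ^ 2) (j ^ 2) := (Int.isCoprime_iff_gcd_eq_one.mpr hg).pow
  have s1 := sqmod8_odd i hio
  have s2 := sqmod8_odd j hjo
  obtain ⟨A, hA, hAodd⟩ : ∃ A, 9 * i ^ 2 + j ^ 2 = 2 * A ∧ A % 2 = 1 := by
    refine ⟨(9 * i ^ 2 + j ^ 2) / 2, ?_, ?_⟩ <;>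
      (generalize i ^ 2 = X at s1 ⊢; generalize j ^ 2 = Y at s2 ⊢; omega)
  obtain ⟨B, hB, hBodd⟩ : ∃ B, i ^ 2 + j ^ 2 = 2 * B ∧ B % 2 = 1 := by
    refine ⟨(i ^ 2 + j ^ 2) / 2, ?_, ?_⟩ <;>
      (generalize i ^ 2 = X at s1 ⊢; generalize j ^ 2 = Y at s2 ⊢; omega)
  have hABv : B * A = v ^ 2 := by
    have h4 : 4 * (B * A) = 4 * v ^ 2 := by
      linear_combination hId - (i ^ 2 + j ^ 2) * hA - (2 * A) * hB
    linarith
  have hcopAB : IsCoprime B A := by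
    apply coprime_of_odd_dvd8
    · left; omega
    · left; omega
    · intro g hg0 hg1 hg2
      have d1 : g ∣ 8 * i ^ 2 := by
        have e : 8 * i ^ 2 = 2 * A - 2 * B := by linear_combination hA - hB
        rw [e]; exact dvd_sub (hg2.mul_left 2) (hg1.mul_left 2)
      have d2 : g ∣ 8 * j ^ 2 := by
        have e : 8 * j ^ 2 = 18 * B - 2 * A := by linear_combination 9 * hB - hA
        rw [e]; exact dvd_sub (hg1.mul_left 18) (hg2.mul_left 2)
      have e : (8:ℤ) = x * (8 * i ^ 2) + y * (8 * j ^ 2) := by linear_combination (-8) * hxy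
      rw [e]; exact dvd_add (d1.mul_left x) (d2.mul_left y)
  obtain ⟨b, hb, hbeq⟩ := sq_of_coprime_pos hcopAB hABv (by
    have : 0 < i ^ 2 + j ^ 2 := by positivity
    omega)
  -- i² + j² = 2b² with 3 ∣ i, 3 ∤ j : contradiction mod 3
  have h3j : ¬ (3:ℤ) ∣ j := fun hd =>
    not_both_dvd (dvd_refl i) (dvd_refl j) hg (by norm_num) ⟨h3i, hd⟩
  have hi3 : i ^ 2 % 3 = 0 := by rcases sq3cases i with ⟨-, e⟩ | ⟨d, -⟩; exact e; exact absurd h3i d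
  have hj3 : j ^ 2 % 3 = 1 := by rcases sq3cases j with ⟨d, -⟩ | ⟨-, e⟩; exact absurd d h3j; exact e
  have hb3 := (sq3cases b).imp (fun h => h.2) (fun h => h.2)
  have hBb : i ^ 2 + j ^ 2 = 2 * b ^ 2 := by rw [hB, hbeq]
  generalize i ^ 2 = X at hi3 hBb
  generalize j ^ 2 = Y at hj3 hBb
  generalize b ^ 2 = Z at hb3 hBb
  omega

/-- split a coprime product equal to 3·square -/
private lemma split3 {X Y s : ℤ} (hX : 0 < X) (hY : 0 < Y) (hcop : IsCoprime X Y)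
    (h : X * Y = 3 * s ^ 2) :
    ∃ i j : ℤ, 0 < i ∧ 0 < j ∧ Int.gcd i j = 1 ∧ i ^ 2 * j ^ 2 = s ^ 2 ∧
      ((X = 3 * i ^ 2 ∧ Y = j ^ 2) ∨ (X = j ^ 2 ∧ Y = 3 * i ^ 2)) := by
  have h3 : (3:ℤ) ∣ X * Y := ⟨s ^ 2, h⟩
  rcases Int.prime_three.dvd_mul.mp h3 with ⟨γ, rfl⟩ | ⟨γ, rfl⟩
  · have hγ : 0 < γ := by omega
    have hmul : γ * Y = s ^ 2 := by
      have h3' : 3 * (γ * Y) = 3 * s ^ 2 := by linear_combination h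
      linarith
    have hcop' : IsCoprime γ Y := hcop.of_isCoprime_of_dvd_left (dvd_mul_left γ 3)
    obtain ⟨i, hi, hieq⟩ := sq_of_coprime_pos hcop' hmul hγ
    obtain ⟨j, hj, hjeq⟩ := sq_of_coprime_pos hcop'.symm (show Y * γ = s ^ 2 by linear_combination hmul) hY
    refine ⟨i, j, hi, hj, ?_, ?_, Or.inl ⟨by rw [hieq], hjeq⟩⟩
    · rw [← Int.isCoprime_iff_gcd_eq_one]
      have : IsCoprime (i ^ 2) (j ^ 2) := by rw [← hieq, ← hjeq]; exact hcop'
      exact ((IsCoprime.pow_left_iff (by norm_num)).mp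
        ((IsCoprime.pow_right_iff (by norm_num)).mp this))
    · rw [← hieq, ← hjeq]; exact hmul
  · have hγ : 0 < γ := by omega
    have hmul : X * γ = s ^ 2 := by
      have h3' : 3 * (X * γ) = 3 * s ^ 2 := by linear_combination h
      linarith
    have hcop' : IsCoprime X γ := hcop.of_isCoprime_of_dvd_right (dvd_mul_left γ 3)
    obtain ⟨j, hj, hjeq⟩ := sq_of_coprime_pos hcop' (show X * γ = s ^ 2 by linear_combination hmul) hX
    obtain ⟨i, hi, hieq⟩ := sq_of_coprime_pos hcop'.symm (show γ * X = s ^ 2 by linear_combination hmul) hγ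
    refine ⟨i, j, hi, hj, ?_, ?_, Or.inr ⟨hjeq, by rw [hieq]⟩⟩
    · rw [← Int.isCoprime_iff_gcd_eq_one]
      have : IsCoprime (j ^ 2) (i ^ 2) := by rw [← hieq, ← hjeq]; exact hcop'
      exact ((IsCoprime.pow_left_iff (by norm_num)).mp
        ((IsCoprime.pow_right_iff (by norm_num)).mp this)).symm
    · rw [← hieq, ← hjeq]; linear_combination hmul

private lemma lemA (p q r : ℤ) (hp : 0 < p) (hq : 0 < q) (hcop : Int.gcd p q = 1)
    (h : (q ^ 2 - 3 * p ^ 2) * (q ^ 2 + p ^ 2) = r ^ 2) : False := by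
  have hsum : 0 < q ^ 2 + p ^ 2 := by positivity
  have hq3 : 0 < q ^ 2 - 3 * p ^ 2 := by
    rcases lt_trichotomy (q ^ 2 - 3 * p ^ 2) 0 with hlt | heq0 | hgt
    · nlinarith [sq_nonneg r]
    · exact absurd (show q ^ 2 = 3 * p ^ 2 by linarith) (fun hh => not_sq3 (show p ≠ 0 by omega) hcop hh)
    · exact hgt
  have hboth : ¬ ((2:ℤ) ∣ p ∧ 2 ∣ q) := not_both_dvd (dvd_refl p) (dvd_refl q) hcop (by norm_num)
  obtain ⟨x, y, hxy⟩ : IsCoprime (p ^ 2) (q ^ 2) := (Int.isCoprime_iff_gcd_eq_one.mpr hcop).pow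
  rcases (by omega : (p % 2 = 1 ∧ q % 2 = 1) ∨ (p % 2 = 1 ∧ q % 2 = 0) ∨ (p % 2 = 0 ∧ q % 2 = 1))
    with ⟨hp2, hq2⟩ | hopp
  · -- both odd
    have s1 := sqmod8_odd p hp2
    have s2 := sqmod8_odd q hq2
    obtain ⟨A, hA, hA4⟩ : ∃ A, q ^ 2 - 3 * p ^ 2 = 2 * A ∧ A % 4 = 3 := by
      refine ⟨(q ^ 2 - 3 * p ^ 2) / 2, ?_, ?_⟩ <;>
        (generalize p ^ 2 = X at s1 ⊢; generalize q ^ 2 = Y at s2 ⊢; omega)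
    obtain ⟨B, hB, hBodd⟩ : ∃ B, q ^ 2 + p ^ 2 = 2 * B ∧ B % 2 = 1 := by
      refine ⟨(q ^ 2 + p ^ 2) / 2, ?_, ?_⟩ <;>
        (generalize p ^ 2 = X at s1 ⊢; generalize q ^ 2 = Y at s2 ⊢; omega)
    have hr2 : r % 2 = 0 := by
      have pr := parity_sq r
      have h4 : r ^ 2 = 4 * (A * B) := by linear_combination -h + 2 * B * hA + (q ^ 2 - 3 * p ^ 2) * hB
      generalize A * B = C at h4
      generalize r ^ 2 = R at h4 pr
      omega
    obtain ⟨r₀, rfl⟩ : ∃ r₀, r = 2 * r₀ := ⟨r / 2, by omega⟩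
    have hABr : A * B = r₀ ^ 2 := by
      have h4 : 4 * (A * B) = 4 * r₀ ^ 2 := by
        linear_combination h - 2 * B * hA - (q ^ 2 - 3 * p ^ 2) * hB
      linarith
    have hcopAB : IsCoprime A B := by
      apply coprime_of_odd_dvd8
      · right; omega
      · right; omega
      · intro g hg0 hg1 hg2
        have d1 : g ∣ 4 * p ^ 2 := by
          have e : 4 * p ^ 2 = 2 * B - 2 * A := by linear_combination hB - hA
          rw [e]; exact dvd_sub (hg2.mul_left 2) (hg1.mul_left 2)
        have d2 : g ∣ 4 * q ^ 2 := by
          have e : 4 * q ^ 2 = 2 * A + 6 * B := by linear_combination hA + 3 * hB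
          rw [e]; exact dvd_add (hg1.mul_left 2) (hg2.mul_left 6)
        have e : (8:ℤ) = 2 * (x * (4 * p ^ 2) + y * (4 * q ^ 2)) := by
          linear_combination (-8) * hxy
        rw [e]; exact (dvd_add (d1.mul_left x) (d2.mul_left y)).mul_left 2
    obtain ⟨a₀, ha₀, ha₀eq⟩ := sq_of_coprime_pos hcopAB hABr (by omega)
    have := sqmod8_cases a₀
    generalize a₀ ^ 2 = X at this ha₀eq
    omega
  · -- opposite parity
    have hoddsum : (q ^ 2 + p ^ 2) % 2 = 1 := by
      have e1 := parity_sq p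
      have e2 := parity_sq q
      generalize p ^ 2 = X at e1 ⊢
      generalize q ^ 2 = Y at e2 ⊢
      omega
    have hcopF : IsCoprime (q ^ 2 - 3 * p ^ 2) (q ^ 2 + p ^ 2) := by
      apply coprime_of_odd_dvd8
      · left; omega
      · right; omega
      · intro g hg0 hg1 hg2
        have d1 : g ∣ 4 * p ^ 2 := by
          have e : 4 * p ^ 2 = (q ^ 2 + p ^ 2) - (q ^ 2 - 3 * p ^ 2) := by ring
          rw [e]; exact dvd_sub hg2 hg1
        have d2 : g ∣ 4 * q ^ 2 := by
          have e : 4 * q ^ 2 = 3 * (q ^ 2 + p ^ 2) + (q ^ 2 - 3 * p ^ 2) := by ring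
          rw [e]; exact dvd_add (hg2.mul_left 3) hg1
        have e : (8:ℤ) = 2 * (x * (4 * p ^ 2) + y * (4 * q ^ 2)) := by
          linear_combination (-8) * hxy
        rw [e]; exact (dvd_add (d1.mul_left x) (d2.mul_left y)).mul_left 2
    obtain ⟨u, hu0, huA⟩ := sq_of_coprime_pos hcopF h hq3
    obtain ⟨v, hv0, hvA⟩ := sq_of_coprime_pos hcopF.symm
      (show (q ^ 2 + p ^ 2) * (q ^ 2 - 3 * p ^ 2) = r ^ 2 by linear_combination h) hsum
    -- 3 ∤ q
    have h3q : ¬ (3:ℤ) ∣ q := by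
      rintro ⟨t, rfl⟩
      rcases sq3cases u with ⟨⟨w, hw⟩, -⟩ | ⟨-, eu⟩
      · have hp3 : (3:ℤ) ∣ p := by
          rcases sq3cases p with ⟨d, -⟩ | ⟨-, ep⟩
          · exact d
          · exfalso
            have h3p2 : 3 * p ^ 2 = 9 * t ^ 2 - 9 * w ^ 2 := by
              linear_combination (-(u + 3 * w)) * hw - huA
            have hX : p ^ 2 = 3 * (t ^ 2 - w ^ 2) := by linarith
            generalize p ^ 2 = X at ep hX
            omega
        exact not_both_dvd (dvd_refl p) (dvd_refl (3 * t)) hcop (by norm_num)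
          ⟨hp3, ⟨t, rfl⟩⟩
      · obtain ⟨X, hX⟩ : ∃ X, u ^ 2 = 3 * X := ⟨3 * t ^ 2 - p ^ 2, by linear_combination -huA⟩
        generalize u ^ 2 = U at eu hX
        omega
    have hq3' : q ^ 2 % 3 = 1 := by
      rcases sq3cases q with ⟨d, -⟩ | ⟨-, e⟩
      · exact absurd d h3q
      · exact e
    have hp3 : (3:ℤ) ∣ p := by
      rcases sq3cases p with ⟨d, -⟩ | ⟨-, ep⟩
      · exact d
      · exfalso
        have ev := (sq3cases v).imp (fun h => h.2) (fun h => h.2)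
        generalize p ^ 2 = X at ep hvA
        generalize q ^ 2 = Y at hq3' hvA
        generalize v ^ 2 = Z at ev hvA
        omega
    -- gcd q u = 1
    have hqu : Int.gcd q u = 1 := by
      have hGq : (Int.gcd q u : ℤ) ∣ q := Int.gcd_dvd_left q u
      have hGu : (Int.gcd q u : ℤ) ∣ u := Int.gcd_dvd_right q u
      have hG2 : ((Int.gcd q u : ℤ)) ^ 2 ∣ 3 * p ^ 2 := by
        have e : 3 * p ^ 2 = q ^ 2 - u ^ 2 := by linear_combination -huA
        rw [e]; exact dvd_sub (pow_dvd_pow_of_dvd hGq 2) (pow_dvd_pow_of_dvd hGu 2)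
      have hcopGp : IsCoprime (((Int.gcd q u : ℤ)) ^ 2) (p ^ 2) :=
        (((Int.isCoprime_iff_gcd_eq_one.mpr hcop).of_isCoprime_of_dvd_right hGq).symm).pow
      have hG3 : ((Int.gcd q u : ℤ)) ^ 2 ∣ 3 := hcopGp.dvd_of_dvd_mul_right hG2
      have hle : ((Int.gcd q u : ℤ)) ^ 2 ≤ 3 := Int.le_of_dvd (by norm_num) hG3
      have hpos : Int.gcd q u ≠ 0 := by
        rw [Ne, Int.gcd_eq_zero_iff]
        exact fun hc => by omega
      have h1 : (1:ℤ) ≤ (Int.gcd q u : ℤ) := by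
        have : (0:ℤ) < (Int.gcd q u : ℤ) := by exact_mod_cast Nat.pos_of_ne_zero hpos
        omega
      have : (Int.gcd q u : ℤ) = 1 := by nlinarith
      exact_mod_cast this
    obtain ⟨xq, yq, hbz⟩ : IsCoprime q u := Int.isCoprime_iff_gcd_eq_one.mpr hqu
    have hqgtu : u < q := by nlinarith [mul_pos hp hp]
    rcases hopp with ⟨hp2, hq2⟩ | ⟨hp2, hq2⟩
    · -- p odd, q even : finisher2
      have hu2 : u % 2 = 1 := by
        have pu := parity_sq u
        have pp := parity_sq p
        have pq := parity_sq q
        generalize u ^ 2 = U at pu huA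
        generalize p ^ 2 = X at pp huA
        generalize q ^ 2 = Y at pq huA
        omega
      have hfac : (q - u) * (q + u) = 3 * p ^ 2 := by linear_combination huA
      have hcfac : IsCoprime (q - u) (q + u) := by
        apply coprime_of_odd_dvd8
        · left; omega
        · left; omega
        · intro g hg0 hg1 hg2
          have d1 : g ∣ 2 * q := by
            have e : 2 * q = (q - u) + (q + u) := by ring
            rw [e]; exact dvd_add hg1 hg2
          have d2 : g ∣ 2 * u := by
            have e : 2 * u = (q + u) - (q - u) := by ring
            rw [e]; exact dvd_sub hg2 hg1
          have e : (8:ℤ) = 4 * (xq * (2 * q) + yq * (2 * u)) := by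
            linear_combination (-8) * hbz
          rw [e]; exact (dvd_add (d1.mul_left xq) (d2.mul_left yq)).mul_left 4
      obtain ⟨i, j, hi, hj, hgij, hij2, hor⟩ :=
        split3 (by omega) (by omega) hcfac hfac
      have h2q : 2 * q = 3 * i ^ 2 + j ^ 2 := by rcases hor with ⟨e1, e2⟩ | ⟨e1, e2⟩ <;> linarith
      have hpij : p ^ 2 = i ^ 2 * j ^ 2 := hij2.symm
      have hoddij : i % 2 = 1 ∧ j % 2 = 1 := by
        have pi' := parity_sq i
        have pj' := parity_sq j
        have hnb : ¬ ((2:ℤ) ∣ i ∧ 2 ∣ j) :=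
          not_both_dvd (dvd_refl i) (dvd_refl j) hgij (by norm_num)
        generalize i ^ 2 = X at pi' h2q
        generalize j ^ 2 = Y at pj' h2q
        omega
      have h3j : ¬ (3:ℤ) ∣ j := by
        rintro ⟨e, rfl⟩
        have h3q' : (3:ℤ) ∣ 2 * q := ⟨i ^ 2 + 3 * e ^ 2, by linear_combination h2q⟩
        exact h3q (by omega)
      have h3i : (3:ℤ) ∣ i := by
        have h3sq : (3:ℤ) ∣ i ^ 2 * j ^ 2 := by
          rw [← hpij]
          exact dvd_pow hp3 (by norm_num)
        rcases Int.prime_three.dvd_mul.mp h3sq with hd | hd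
        · exact Int.prime_three.dvd_of_dvd_pow hd
        · exact absurd (Int.prime_three.dvd_of_dvd_pow hd) h3j
      have hId : (9 * i ^ 2 + j ^ 2) * (i ^ 2 + j ^ 2) = 4 * v ^ 2 := by
        linear_combination 4 * hvA - (2 * q + 3 * i ^ 2 + j ^ 2) * h2q - 4 * hpij
      exact finisher2 hi hj hgij h3i hoddij.1 hoddij.2 hId
    · -- p even, q odd : finisher1
      have hu2 : u % 2 = 1 := by
        have pu := parity_sq u
        have pp := parity_sq p
        have pq := parity_sq q
        generalize u ^ 2 = U at pu huA
        generalize p ^ 2 = X at pp huA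
        generalize q ^ 2 = Y at pq huA
        omega
      obtain ⟨α, hα⟩ : ∃ α, q - u = 2 * α := ⟨(q - u) / 2, by omega⟩
      obtain ⟨β, hβ⟩ : ∃ β, q + u = 2 * β := ⟨(q + u) / 2, by omega⟩
      obtain ⟨w, hw⟩ : ∃ w, p = 2 * w := ⟨p / 2, by omega⟩
      have hq' : q = α + β := by omega
      have hu' : u = β - α := by omega
      subst hq' hu' hw
      have hmul : α * β = 3 * w ^ 2 := by
        have h4 : 4 * (α * β) = 4 * (3 * w ^ 2) := by linear_combination huA
        linarith
      have hcαβ : IsCoprime α β := by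
        apply coprime_of_odd_dvd8
        · left; omega
        · omega
        · intro g hg0 hg1 hg2
          have d1 : g ∣ α + β := dvd_add hg1 hg2
          have d2 : g ∣ β - α := dvd_sub hg2 hg1
          have e : (8:ℤ) = 8 * (xq * (α + β) + yq * (β - α)) := by
            linear_combination (-8) * hbz
          rw [e]; exact (dvd_add (d1.mul_left xq) (d2.mul_left yq)).mul_left 8
      obtain ⟨i, j, hi, hj, hgij, hij2, hor⟩ :=
        split3 (by omega) (by omega) hcαβ hmul
      have hqS : α + β = 3 * i ^ 2 + j ^ 2 := by rcases hor with ⟨e1, e2⟩ | ⟨e1, e2⟩ <;> linarith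
      have h3j : ¬ (3:ℤ) ∣ j := by
        rintro ⟨e, rfl⟩
        have h3q' : (3:ℤ) ∣ α + β := ⟨i ^ 2 + 3 * e ^ 2, by linear_combination hqS⟩
        exact h3q h3q'
      have h3i : (3:ℤ) ∣ i := by
        have h3w : (3:ℤ) ∣ w := by omega
        have h3sq : (3:ℤ) ∣ i ^ 2 * j ^ 2 := by
          rw [hij2]
          exact dvd_pow h3w (by norm_num)
        rcases Int.prime_three.dvd_mul.mp h3sq with hd | hd
        · exact Int.prime_three.dvd_of_dvd_pow hd
        · exact absurd (Int.prime_three.dvd_of_dvd_pow hd) h3j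
      have hparity : (i ^ 2 + j ^ 2) % 2 = 1 := by
        generalize i ^ 2 = X at hqS ⊢
        generalize j ^ 2 = Y at hqS ⊢
        omega
      have hId : (9 * i ^ 2 + j ^ 2) * (i ^ 2 + j ^ 2) = v ^ 2 := by
        linear_combination hvA - (α + β + 3 * i ^ 2 + j ^ 2) * hqS + 4 * hij2
      exact finisher1 hi hj hgij h3i hparity hId


/-- there are no equilateral hyperbolic Heron triangles, in the
algebraic form: there are no rationals `c = cos α`, `s = sin α`, `d` with
`c² + s² = 1`, `1/2 < c < 1`, `s > 0`, `d > 0` and `d² = (2c−1)(c+1)²`. -/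
theorem no_equilateral_heron :
    ¬ ∃ c s d : ℚ, c ^ 2 + s ^ 2 = 1 ∧ 1 / 2 < c ∧ c < 1 ∧ 0 < s ∧ 0 < d ∧
      d ^ 2 = (2 * c - 1) * (c + 1) ^ 2 := by
  rintro ⟨c, s, d, hcs, hc2, hc1, hs, hd, hd2⟩
  have hc1p : (0:ℚ) < c + 1 := by linarith
  have hc1ne : (c + 1) ≠ 0 := ne_of_gt hc1p
  set t : ℚ := s / (c + 1) with ht
  have ht0 : 0 < t := div_pos hs hc1p
  set y : ℚ := 2 * d / (c + 1) ^ 2 with hy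
  have hs2 : s ^ 2 = 1 - c ^ 2 := by linarith
  have ht2 : t ^ 2 * (c + 1) ^ 2 = s ^ 2 := by
    rw [ht]; field_simp
  have hy2 : y ^ 2 * (c + 1) ^ 4 = 4 * d ^ 2 := by
    rw [hy]; field_simp; ring
  have keymul : ((1 - 3 * t ^ 2) * (1 + t ^ 2)) * (c + 1) ^ 4 = y ^ 2 * (c + 1) ^ 4 := by
    linear_combination (-(2 * (c + 1) ^ 2) - 3 * s ^ 2 - 3 * t ^ 2 * (c + 1) ^ 2) * ht2 +
      (2 * (2 * c - 1) * (c + 1) - 6 * (c + 1) - 3 * (s ^ 2 - 1 + c ^ 2)) * hs2 +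
      (-4) * hd2 + (-1) * hy2
  have key : (1 - 3 * t ^ 2) * (1 + t ^ 2) = y ^ 2 :=
    mul_right_cancel₀ (pow_ne_zero 4 hc1ne) keymul
  -- integers
  have hp : 0 < t.num := Rat.num_pos.mpr ht0
  have hq : 0 < (t.den : ℤ) := Int.natCast_pos.mpr t.pos
  have hdq0 : ((t.den : ℕ) : ℚ) ≠ 0 := Nat.cast_ne_zero.mpr t.den_nz
  have hnd := Rat.num_div_den t
  have hpq : ((t.num : ℤ) : ℚ) = t * ((t.den : ℕ) : ℚ) := (div_eq_iff hdq0).mp hnd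
  have R : (((t.den : ℕ) : ℚ) ^ 2 - 3 * ((t.num : ℤ) : ℚ) ^ 2) *
      (((t.den : ℕ) : ℚ) ^ 2 + ((t.num : ℤ) : ℚ) ^ 2) =
      (y * ((t.den : ℕ) : ℚ) ^ 2) ^ 2 := by
    linear_combination ((t.den : ℕ) : ℚ) ^ 4 * key +
      (((t.num : ℤ) : ℚ) + t * ((t.den : ℕ) : ℚ)) * (-2 * ((t.den : ℕ) : ℚ) ^ 2 -
        3 * (((t.num : ℤ) : ℚ) ^ 2 + t ^ 2 * ((t.den : ℕ) : ℚ) ^ 2)) * hpq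
  set Y : ℚ := y * ((t.den : ℕ) : ℚ) ^ 2 with hYdef
  set NN : ℤ := ((t.den : ℤ) ^ 2 - 3 * t.num ^ 2) * ((t.den : ℤ) ^ 2 + t.num ^ 2) with hNN
  have hNY : ((NN : ℤ) : ℚ) = Y ^ 2 := by
    rw [hNN, hYdef]
    push_cast
    linear_combination R
  -- Y is an integer
  have hYd0 : ((Y.den : ℕ) : ℚ) ≠ 0 := Nat.cast_ne_zero.mpr Y.den_nz
  have hYnd := Rat.num_div_den Y
  have hYd : ((Y.num : ℤ) : ℚ) = Y * ((Y.den : ℕ) : ℚ) := (div_eq_iff hYd0).mp hYnd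
  have h1 : ((Y.num : ℤ) : ℚ) ^ 2 = ((NN : ℤ) : ℚ) * ((Y.den : ℕ) : ℚ) ^ 2 := by
    linear_combination (((Y.num : ℤ) : ℚ) + Y * ((Y.den : ℕ) : ℚ)) * hYd -
      ((Y.den : ℕ) : ℚ) ^ 2 * hNY
  have hz : Y.num ^ 2 = NN * (Y.den : ℤ) ^ 2 := by exact_mod_cast h1
  have hcopY : Int.gcd Y.num (Y.den : ℤ) = 1 := by
    simpa [Int.gcd] using Y.reduced
  obtain ⟨uu, vv, huv⟩ : IsCoprime ((Y.den : ℤ) ^ 2) (Y.num ^ 2) :=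
    ((Int.isCoprime_iff_gcd_eq_one.mpr hcopY).symm).pow
  have hdvd : ((Y.den : ℤ)) ^ 2 ∣ Y.num ^ 2 := ⟨NN, by linarith [hz]⟩
  have hdvd1 : ((Y.den : ℤ)) ^ 2 ∣ 1 := by
    rw [← huv]
    exact dvd_add (dvd_mul_left _ uu) (hdvd.mul_left vv)
  have hd1 : ((Y.den : ℤ)) ^ 2 = 1 := by
    have h1' : ((Y.den : ℤ)) ^ 2 ≤ 1 := Int.le_of_dvd (by norm_num) hdvd1
    have h2' : (1:ℤ) ≤ (Y.den : ℤ) := by exact_mod_cast Y.pos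
    nlinarith
  have hNr : NN = Y.num ^ 2 := by rw [hz, hd1]; ring
  exact lemA t.num (t.den : ℤ) Y.num hp hq (by simpa [Int.gcd] using t.reduced) (hNN ▸ hNr)
end

section
/- The only rational points on the quartic curve v² = −u⁴ − 2u² + 3 are (u,v) = (1,0) and (u,v) = (−1,0): for all rational numbers u, v, if v² = −u⁴ − 2u² + 3 then v = 0 and u² = 1. -/
set_option maxHeartbeats 1000000
private lemma coprime_of_prime' (a b : ℤ)
    (h : ∀ p : ℤ, Prime p → p ∣ a → p ∣ b → False) : IsCoprime a b := by
  rw [Int.isCoprime_iff_gcd_eq_one]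
  by_contra hg
  obtain ⟨p, pp, pd⟩ := Nat.exists_prime_and_dvd hg
  exact h p (Nat.prime_iff_prime_int.mp pp)
    (dvd_trans (Int.natCast_dvd_natCast.mpr pd) (Int.gcd_dvd_left _ _))
    (dvd_trans (Int.natCast_dvd_natCast.mpr pd) (Int.gcd_dvd_right _ _))

private lemma odd_sq' {m : ℤ} (h : m % 2 = 1) : ∃ j, m ^ 2 = 8 * j + 1 := by
  obtain ⟨k, rfl⟩ : ∃ k, m = 2 * k + 1 := ⟨m / 2, by omega⟩
  rcases Int.even_or_odd k with ⟨t, rfl⟩ | ⟨t, rfl⟩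
  · exact ⟨2 * t ^ 2 + t, by ring⟩
  · exact ⟨2 * t ^ 2 + 3 * t + 1, by ring⟩

private lemma sq_nonneg_inj {a b : ℤ} (ha : 0 ≤ a) (hb : 0 ≤ b) (h : a ^ 2 = b ^ 2) : a = b := by
  rcases mul_eq_zero.mp (show (a - b) * (a + b) = 0 by linear_combination h) with h' | h' <;> omega

private lemma sq_split {a b c : ℤ} (h : IsCoprime a b) (heq : a * b = c ^ 2) (ha : 0 < a) :
    ∃ d : ℤ, 0 < d ∧ a = d ^ 2 := by
  obtain ⟨d, hd | hd⟩ := Int.sq_of_isCoprime h heq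
  · have hd' : a = |d| ^ 2 := by rw [sq_abs]; exact hd
    have : d ≠ 0 := by rintro rfl; rw [hd] at ha; simp at ha
    exact ⟨|d|, abs_pos.mpr this, hd'⟩
  · exfalso; nlinarith [sq_nonneg d]

private lemma pow4_split {a b c : ℤ} (h : IsCoprime a b) (heq : a * b = c ^ 4) (ha : 0 < a) :
    ∃ d : ℤ, 0 < d ∧ a = d ^ 4 := by
  have h' : IsUnit (GCDMonoid.gcd a b) := by
    rw [← Int.coe_gcd, Int.isCoprime_iff_gcd_eq_one.mp h, Int.ofNat_one]
    exact isUnit_one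
  obtain ⟨d, u, hu⟩ := exists_associated_pow_of_mul_eq_pow h' heq
  rcases Int.units_eq_one_or u with h1 | h1 <;> rw [h1] at hu
  · refine ⟨|d|, ?_, ?_⟩
    · rcases abs_nonneg d |>.lt_or_eq with h2 | h2
      · exact h2
      · exfalso
        have h3 : d = 0 := by rwa [eq_comm, abs_eq_zero] at h2
        subst h3; simp at hu; omega
    · simp only [Units.val_one, mul_one] at hu ⊢
      rw [← hu, ← abs_pow, abs_of_nonneg (by positivity : (0:ℤ) ≤ d ^ 4)]
  · exfalso
    have h2 : a = -d ^ 4 := by rw [← hu]; simp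
    nlinarith [sq_nonneg (d ^ 2)]

private lemma not_isunit_two : ¬ IsUnit (2 : ℤ) := by
  rw [Int.isUnit_iff]; omega

private lemma pow4_odd {C : ℤ} (h : C % 2 = 1) : ∃ j, C ^ 4 = 8 * j + 1 := by
  have h2 : C ^ 2 % 2 = 1 := Int.odd_iff.mp ((Int.odd_iff.mpr h).pow)
  obtain ⟨j, hj⟩ := odd_sq' h2
  exact ⟨j, by linear_combination hj⟩

private lemma parity_force {m k C D : ℤ} (hm : m % 2 = 1) (hco : IsCoprime C D)
    (hk2 : k ^ 2 = C ^ 2 * D ^ 2) (hXA : m ^ 2 + 2 * k ^ 2 = C ^ 4 - 3 * D ^ 4) :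
    C % 2 = 1 ∧ D % 2 = 0 := by
  obtain ⟨j, hj⟩ := odd_sq' hm
  rcases Int.emod_two_eq C with hC2 | hC2 <;> rcases Int.emod_two_eq D with hD2 | hD2
  · exact absurd (hco.isUnit_of_dvd' (Int.dvd_of_emod_eq_zero hC2)
      (Int.dvd_of_emod_eq_zero hD2)) not_isunit_two
  · -- C even, D odd : impossible
    exfalso
    obtain ⟨c, rfl⟩ : ∃ c, C = 2 * c := ⟨C / 2, by omega⟩
    obtain ⟨d4, hd4⟩ := pow4_odd hD2
    have lk : 2 * k ^ 2 = 8 * (c ^ 2 * D ^ 2) := by rw [hk2]; ring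
    have lin : 8 * j + 1 + 8 * (c ^ 2 * D ^ 2) = 16 * c ^ 4 - 3 * (8 * d4 + 1) := by
      rw [← hj, ← lk, ← hd4]; linear_combination hXA
    generalize c ^ 2 * D ^ 2 = w at lin
    generalize c ^ 4 = v at lin
    omega
  · -- C odd, D even : ok
    exact ⟨hC2, hD2⟩
  · -- both odd : impossible
    exfalso
    have hkodd : k % 2 = 1 := by
      have hodd2 : Odd (k ^ 2) := by
        rw [hk2]
        exact ((Int.odd_iff.mpr hC2).pow).mul ((Int.odd_iff.mpr hD2).pow)
      exact Int.odd_iff.mp ((Int.odd_pow' (by norm_num)).mp hodd2)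
    obtain ⟨κ, hκ⟩ := odd_sq' hkodd
    obtain ⟨c4, hc4⟩ := pow4_odd hC2
    obtain ⟨d4, hd4⟩ := pow4_odd hD2
    have lin : 8 * j + 1 + 2 * (8 * κ + 1) = (8 * c4 + 1) - 3 * (8 * d4 + 1) := by
      rw [← hj, ← hκ, ← hc4, ← hd4]; linear_combination hXA
    omega

private lemma caseB_impossible {m k C D : ℤ} (hm : m % 2 = 1) (hco : IsCoprime C D)
    (hk2 : k ^ 2 = C ^ 2 * D ^ 2) (hXB : m ^ 2 + 2 * k ^ 2 = 3 * D ^ 4 - C ^ 4) : False := by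
  obtain ⟨j, hj⟩ := odd_sq' hm
  rcases Int.emod_two_eq C with hC2 | hC2 <;> rcases Int.emod_two_eq D with hD2 | hD2
  · exact absurd (hco.isUnit_of_dvd' (Int.dvd_of_emod_eq_zero hC2)
      (Int.dvd_of_emod_eq_zero hD2)) not_isunit_two
  · obtain ⟨c, rfl⟩ : ∃ c, C = 2 * c := ⟨C / 2, by omega⟩
    obtain ⟨d4, hd4⟩ := pow4_odd hD2
    have lk : 2 * k ^ 2 = 8 * (c ^ 2 * D ^ 2) := by rw [hk2]; ring
    have lin : 8 * j + 1 + 8 * (c ^ 2 * D ^ 2) = 3 * (8 * d4 + 1) - 16 * c ^ 4 := by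
      rw [← hj, ← lk, ← hd4]; linear_combination hXB
    generalize c ^ 2 * D ^ 2 = w at lin
    generalize c ^ 4 = v at lin
    omega
  · obtain ⟨d, rfl⟩ : ∃ d, D = 2 * d := ⟨D / 2, by omega⟩
    obtain ⟨c4, hc4⟩ := pow4_odd hC2
    have lk : 2 * k ^ 2 = 8 * (C ^ 2 * d ^ 2) := by rw [hk2]; ring
    have lin : 8 * j + 1 + 8 * (C ^ 2 * d ^ 2) = 48 * d ^ 4 - (8 * c4 + 1) := by
      rw [← hj, ← lk, ← hc4]; linear_combination hXB
    generalize C ^ 2 * d ^ 2 = w at lin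
    generalize d ^ 4 = v at lin
    omega
  · have hkodd : k % 2 = 1 := by
      have hodd2 : Odd (k ^ 2) := by
        rw [hk2]
        exact ((Int.odd_iff.mpr hC2).pow).mul ((Int.odd_iff.mpr hD2).pow)
      exact Int.odd_iff.mp ((Int.odd_pow' (by norm_num)).mp hodd2)
    obtain ⟨κ, hκ⟩ := odd_sq' hkodd
    obtain ⟨c4, hc4⟩ := pow4_odd hC2
    obtain ⟨d4, hd4⟩ := pow4_odd hD2
    have lin : 8 * j + 1 + 2 * (8 * κ + 1) = 3 * (8 * d4 + 1) - (8 * c4 + 1) := by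
      rw [← hj, ← hκ, ← hc4, ← hd4]; linear_combination hXB
    omega

private lemma core (f : ℕ) (m n : ℤ) (hco : Int.gcd m n = 1)
    (hm : m % 2 = 1) (hn : n % 2 = 0) (hn0 : n ≠ 0)
    (heq : (f : ℤ) ^ 2 = m ^ 4 + m ^ 2 * n ^ 2 + n ^ 4) :
    ∃ (C : ℕ) (S T : ℤ), C < f ∧ Int.gcd S T = 1 ∧
      (C : ℤ) ^ 2 = S ^ 4 + S ^ 2 * T ^ 2 + T ^ 4 ∧ S * T ≠ 0 := by
  have hcoI : IsCoprime m n := Int.isCoprime_iff_gcd_eq_one.mpr hco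
  obtain ⟨k, rfl⟩ : ∃ k, n = 2 * k := ⟨n / 2, by omega⟩
  have hk0 : k ≠ 0 := by simpa using hn0
  have hm0 : m ≠ 0 := by rintro rfl; simp at hm
  have hmodd : Odd m := Int.odd_iff.mpr hm
  obtain ⟨j, hj⟩ := odd_sq' hm
  have hfX : (f : ℤ) ^ 2 = (m ^ 2 + 2 * k ^ 2) ^ 2 + 12 * k ^ 4 := by linear_combination heq
  have hXpos : 0 < m ^ 2 + 2 * k ^ 2 := by positivity
  have hXodd : (m ^ 2 + 2 * k ^ 2) % 2 = 1 :=
    Int.odd_iff.mp ((hmodd.pow).add_even ⟨k ^ 2, by ring⟩)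
  have hk4pos : 0 < k ^ 4 := by positivity
  have hfpos : 0 < (f : ℤ) := by
    rcases Nat.eq_zero_or_pos f with rfl | h
    · exfalso
      have hX2 : 0 < (m ^ 2 + 2 * k ^ 2) ^ 2 := by positivity
      simp only [Nat.cast_zero] at hfX
      have h00 : (0:ℤ) = (m ^ 2 + 2 * k ^ 2) ^ 2 + 12 * k ^ 4 := by linear_combination hfX
      linarith
    · exact_mod_cast h
  have hfodd : (f : ℤ) % 2 = 1 := by
    rcases Int.even_or_odd (f : ℤ) with he | ho
    · exfalso
      obtain ⟨t, ht⟩ := he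
      obtain ⟨x, hx⟩ := odd_sq' hXodd
      have lin : (t + t) ^ 2 = (8 * x + 1) + 12 * k ^ 4 := by
        rw [← hx]; linear_combination hfX - congrArg (· ^ 2) ht
      have h2 : (2 : ℤ) ∣ (t + t) ^ 2 := ⟨2 * t ^ 2, by ring⟩
      have h3 : (2 : ℤ) ∣ (8 * x + 1) + 12 * k ^ 4 := lin ▸ h2
      obtain ⟨y, hy⟩ := h3
      have h4 : (2 : ℤ) ∣ 12 * k ^ 4 := ⟨6 * k ^ 4, by ring⟩
      obtain ⟨z, hz⟩ := h4
      omega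
    · exact Int.odd_iff.mp ho
  have hXf : m ^ 2 + 2 * k ^ 2 < (f : ℤ) := by
    have h1 : (m ^ 2 + 2 * k ^ 2) ^ 2 < (f : ℤ) ^ 2 := by linarith
    exact lt_of_pow_lt_pow_left₀ 2 hfpos.le h1
  -- split f - X and f + X
  obtain ⟨P1, hP1⟩ : ∃ P1, (f : ℤ) - (m ^ 2 + 2 * k ^ 2) = 2 * P1 :=
    ⟨((f : ℤ) - (m ^ 2 + 2 * k ^ 2)) / 2, by omega⟩
  obtain ⟨P2, hP2⟩ : ∃ P2, (f : ℤ) + (m ^ 2 + 2 * k ^ 2) = 2 * P2 :=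
    ⟨((f : ℤ) + (m ^ 2 + 2 * k ^ 2)) / 2, by omega⟩
  have hprod : P1 * P2 = 3 * k ^ 4 := by
    have h4 : (2 * P1) * (2 * P2) = 12 * k ^ 4 := by
      rw [← hP1, ← hP2]; linear_combination hfX
    have h4' : 4 * (P1 * P2) = 4 * (3 * k ^ 4) := by linear_combination h4
    exact mul_left_cancel₀ (by norm_num) h4'
  have hP1pos : 0 < P1 := by linarith
  have hP2pos : 0 < P2 := by linarith
  have hfP : (f : ℤ) = P1 + P2 := by linarith
  have hXP : m ^ 2 + 2 * k ^ 2 = P2 - P1 := by linarith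
  have hcoP : IsCoprime P1 P2 := by
    apply coprime_of_prime'
    intro p pp hp1 hp2
    have hknd : ∀ q : ℤ, Prime q → q ∣ k → q ∣ P1 → q ∣ P2 → False := by
      intro q qq hqk hq1 hq2
      have hqX : q ∣ m ^ 2 + 2 * k ^ 2 := by rw [hXP]; exact dvd_sub hq2 hq1
      obtain ⟨r, hr⟩ := hqk
      have h2k : q ∣ 2 * k ^ 2 := ⟨2 * q * r ^ 2, by rw [hr]; ring⟩
      have hqm : q ∣ m := qq.dvd_of_dvd_pow (by simpa using hqX.sub h2k)
      exact qq.not_unit (hcoI.isUnit_of_dvd' hqm ⟨2 * r, by rw [hr]; ring⟩)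
    have hp3k : p ∣ 3 * k ^ 4 := hprod ▸ Dvd.dvd.mul_right hp1 P2
    rcases pp.dvd_mul.mp hp3k with hp3 | hpk4
    · -- p = ±3
      have pnat : Nat.Prime p.natAbs := Int.prime_iff_natAbs_prime.mp pp
      have hp3' : p.natAbs ∣ 3 := by
        rw [← Int.natAbs_natCast 3]; exact Int.natAbs_dvd_natAbs.mpr hp3
      have hpn : p.natAbs = 3 := by
        rcases (Nat.prime_three).eq_one_or_self_of_dvd p.natAbs hp3' with h | h
        · exact absurd h pnat.ne_one
        · exact h
      have h3P1 : (3 : ℤ) ∣ P1 := by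
        have := Int.natAbs_dvd.mpr hp1; rw [hpn] at this; exact_mod_cast this
      have h3P2 : (3 : ℤ) ∣ P2 := by
        have := Int.natAbs_dvd.mpr hp2; rw [hpn] at this; exact_mod_cast this
      obtain ⟨q1, hq1⟩ := h3P1
      obtain ⟨q2, hq2⟩ := h3P2
      have h9 : (3 : ℤ) ∣ k ^ 4 := by
        have h99 : 9 * (q1 * q2) = 3 * k ^ 4 := by
          rw [hq1, hq2] at hprod; linear_combination hprod
        exact ⟨q1 * q2, by linarith⟩
      have h3k : (3 : ℤ) ∣ k := Int.Prime.dvd_pow' (by norm_num) h9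
      exact hknd 3 Int.prime_three h3k ⟨q1, hq1⟩ ⟨q2, hq2⟩
    · exact hknd p pp (pp.dvd_of_dvd_pow hpk4) hp1 hp2
  have h3P : (3 : ℤ) ∣ P1 ∨ (3 : ℤ) ∣ P2 :=
    Int.Prime.dvd_mul' (by norm_num) (by rw [hprod]; exact ⟨k ^ 4, rfl⟩)
  obtain ⟨C, D, hCpos, hDpos, hcoCD, hk2, hXAB, hfA⟩ :
      ∃ C D : ℤ, 0 < C ∧ 0 < D ∧ IsCoprime C D ∧ k ^ 2 = C ^ 2 * D ^ 2 ∧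
        (m ^ 2 + 2 * k ^ 2 = C ^ 4 - 3 * D ^ 4 ∨ m ^ 2 + 2 * k ^ 2 = 3 * D ^ 4 - C ^ 4) ∧
        (f : ℤ) = C ^ 4 + 3 * D ^ 4 := by
    rcases h3P with h3 | h3
    · obtain ⟨d0, hd0⟩ := h3
      have hd0pos : 0 < d0 := by linarith
      have hd0P2 : d0 * P2 = k ^ 4 := by
        have h30 : 3 * (d0 * P2) = 3 * k ^ 4 := by rw [← hprod, hd0]; ring
        exact mul_left_cancel₀ (by norm_num) h30
      have hcod : IsCoprime d0 P2 := hcoP.of_isCoprime_of_dvd_left ⟨3, by rw [hd0]; ring⟩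
      obtain ⟨D, hDpos, hD⟩ := pow4_split hcod hd0P2 hd0pos
      obtain ⟨C, hCpos, hC⟩ := pow4_split hcod.symm (by rw [mul_comm]; exact hd0P2) hP2pos
      rw [hD, hC] at hd0P2 hcod
      refine ⟨C, D, hCpos, hDpos,
        ((hcod.of_isCoprime_of_dvd_left (dvd_pow_self D (by norm_num))).of_isCoprime_of_dvd_right
          (dvd_pow_self C (by norm_num))).symm,
        sq_nonneg_inj (sq_nonneg k) (by positivity) (by linear_combination - hd0P2),
        Or.inl (by rw [hXP, hd0, hD, hC] <;> ring),
        by rw [hfP, hd0, hD, hC] <;> ring⟩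
    · obtain ⟨d0, hd0⟩ := h3
      have hd0pos : 0 < d0 := by linarith
      have hd0P1 : d0 * P1 = k ^ 4 := by
        have h30 : 3 * (d0 * P1) = 3 * k ^ 4 := by rw [← hprod, hd0]; ring
        exact mul_left_cancel₀ (by norm_num) h30
      have hcod : IsCoprime d0 P1 := hcoP.symm.of_isCoprime_of_dvd_left ⟨3, by rw [hd0]; ring⟩
      obtain ⟨D, hDpos, hD⟩ := pow4_split hcod hd0P1 hd0pos
      obtain ⟨C, hCpos, hC⟩ := pow4_split hcod.symm (by rw [mul_comm]; exact hd0P1) hP1pos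
      rw [hD, hC] at hd0P1 hcod
      refine ⟨C, D, hCpos, hDpos,
        ((hcod.of_isCoprime_of_dvd_left (dvd_pow_self D (by norm_num))).of_isCoprime_of_dvd_right
          (dvd_pow_self C (by norm_num))).symm,
        sq_nonneg_inj (sq_nonneg k) (by positivity) (by linear_combination - hd0P1),
        Or.inr (by rw [hXP, hd0, hD, hC] <;> ring),
        by rw [hfP, hd0, hD, hC] <;> ring⟩
  rcases hXAB with hXA | hXB
  swap
  · exact absurd (caseB_impossible hm hcoCD hk2 hXB) not_false
  obtain ⟨hCodd, hDeven⟩ := parity_force hm hcoCD hk2 hXA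
  have hm2 : m ^ 2 = (C ^ 2 + D ^ 2) * (C ^ 2 - 3 * D ^ 2) := by
    linear_combination hXA - 2 * hk2
  have hmsq : 0 < m ^ 2 := by positivity
  have hCDpos : 0 < C ^ 2 + D ^ 2 := by positivity
  have hCD3pos : 0 < C ^ 2 - 3 * D ^ 2 := by
    by_contra hcon
    push_neg at hcon
    have hle : (C ^ 2 + D ^ 2) * (C ^ 2 - 3 * D ^ 2) ≤ 0 :=
      mul_nonpos_iff.mpr (Or.inl ⟨hCDpos.le, hcon⟩)
    linarith
  have hzpos : 0 < C ^ 2 - D ^ 2 := by linarith [sq_nonneg D]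
  have hz2 : (C ^ 2 - D ^ 2) ^ 2 = m ^ 2 + 4 * D ^ 4 := by linear_combination -hm2
  have hpy : PythagoreanTriple m (2 * D ^ 2) (C ^ 2 - D ^ 2) :=
    (by linear_combination hm2 : m * m + (2 * D ^ 2) * (2 * D ^ 2) =
      (C ^ 2 - D ^ 2) * (C ^ 2 - D ^ 2))
  have hgcd : Int.gcd m (2 * D ^ 2) = 1 := by
    rw [← Int.isCoprime_iff_gcd_eq_one]
    apply coprime_of_prime'
    intro p pp hpm hp2D
    rcases pp.dvd_mul.mp hp2D with hp2 | hpD2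
    · have hp2' : p.natAbs ∣ 2 := by
        rw [← Int.natAbs_natCast 2]; exact Int.natAbs_dvd_natAbs.mpr hp2
      have pnat : Nat.Prime p.natAbs := Int.prime_iff_natAbs_prime.mp pp
      have hpn : p.natAbs = 2 := by
        rcases (Nat.prime_two).eq_one_or_self_of_dvd p.natAbs hp2' with h | h
        · exact absurd h pnat.ne_one
        · exact h
      have h2m : (2 : ℤ) ∣ m := by
        have hh := Int.natAbs_dvd.mpr hpm; rw [hpn] at hh; exact_mod_cast hh
      obtain ⟨r, hr⟩ := h2m
      omega
    · have hpD : p ∣ D := pp.dvd_of_dvd_pow hpD2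
      have hpz : p ∣ (C ^ 2 - D ^ 2) ^ 2 := by
        rw [hz2]
        obtain ⟨r, hr⟩ := hpD
        exact dvd_add (Dvd.dvd.pow hpm (by norm_num)) ⟨4 * p ^ 3 * r ^ 4, by rw [hr]; ring⟩
      have hpz' : p ∣ C ^ 2 - D ^ 2 := pp.dvd_of_dvd_pow hpz
      have hpC : p ∣ C := by
        apply pp.dvd_of_dvd_pow (n := 2)
        obtain ⟨r, hr⟩ := hpD
        have : C ^ 2 = (C ^ 2 - D ^ 2) + D ^ 2 := by ring
        rw [this]
        exact dvd_add hpz' ⟨p * r ^ 2, by rw [hr]; ring⟩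
      exact pp.not_unit (hcoCD.isUnit_of_dvd' hpC hpD)
  obtain ⟨s, t, hms, hys, hzs, hcost, hparst, hsnn⟩ :=
    PythagoreanTriple.coprime_classification' hpy hgcd hm hzpos
  have hst : s * t = D ^ 2 := by linarith
  have hD2pos : 0 < D ^ 2 := by positivity
  have hspos : 0 < s := by
    rcases hsnn.lt_or_eq with h | h
    · exact h
    · exfalso; rw [← h] at hst; simp at hst; linarith
  have htpos : 0 < t := by
    by_contra hcon
    push_neg at hcon
    have hle : s * t ≤ 0 := mul_nonpos_iff.mpr (Or.inl ⟨hspos.le, hcon⟩)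
    linarith
  have hcostI : IsCoprime s t := Int.isCoprime_iff_gcd_eq_one.mpr hcost
  obtain ⟨S, hSpos, hS⟩ := sq_split hcostI hst hspos
  obtain ⟨T, hTpos, hT⟩ := sq_split hcostI.symm (by rw [mul_comm]; exact hst) htpos
  have hCnat : ((C.natAbs : ℤ)) = C := Int.natAbs_of_nonneg hCpos.le
  refine ⟨C.natAbs, S, T, ?_, ?_, ?_, ?_⟩
  · have hC1 : 1 ≤ C := hCpos
    have hD1 : 1 ≤ D := hDpos
    have h1 : C ≤ C ^ 4 := le_self_pow₀ hC1 (by norm_num)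
    have h2 : 1 ≤ D ^ 4 := by
      have := pow_pos hDpos 4
      omega
    have hlt : C < (f : ℤ) := by linarith [hfA]
    have : (C.natAbs : ℤ) < (f : ℤ) := by rw [hCnat]; exact hlt
    exact_mod_cast this
  · exact Int.isCoprime_iff_gcd_eq_one.mp
      ((hcostI.of_isCoprime_of_dvd_left ⟨S, by rw [hS]; ring⟩).of_isCoprime_of_dvd_right
        ⟨T, by rw [hT]; ring⟩)
  · have e1 : C ^ 2 = s ^ 2 + t ^ 2 + s * t := by linear_combination hzs - hst
    rw [hS, hT] at e1
    rw [hCnat]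
    linear_combination e1
  · have : 0 < S * T := by positivity
    exact this.ne'

private lemma descent : ∀ f : ℕ, ∀ m n : ℤ, Int.gcd m n = 1 →
    (f : ℤ) ^ 2 = m ^ 4 + m ^ 2 * n ^ 2 + n ^ 4 → m * n = 0 := by
  intro f
  induction f using Nat.strong_induction_on with
  | _ f IH =>
    intro m n hco heq
    by_contra hmn
    have hm0 : m ≠ 0 := fun h => hmn (by rw [h]; ring)
    have hn0 : n ≠ 0 := fun h => hmn (by rw [h]; ring)
    have hpar : (m % 2 = 1 ∧ n % 2 = 0) ∨ (m % 2 = 0 ∧ n % 2 = 1) := by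
      rcases Int.emod_two_eq m with h1 | h1 <;> rcases Int.emod_two_eq n with h2 | h2
      · exact absurd ((Int.isCoprime_iff_gcd_eq_one.mpr hco).isUnit_of_dvd'
          (Int.dvd_of_emod_eq_zero h1) (Int.dvd_of_emod_eq_zero h2)) not_isunit_two
      · exact Or.inr ⟨h1, h2⟩
      · exact Or.inl ⟨h1, h2⟩
      · exfalso
        obtain ⟨j1, hj1⟩ := pow4_odd h1
        obtain ⟨j2, hj2⟩ := pow4_odd h2
        obtain ⟨a, ha⟩ := odd_sq' h1
        obtain ⟨b, hb⟩ := odd_sq' h2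
        have hw : m ^ 2 * n ^ 2 = 8 * (8 * a * b + a + b) + 1 := by rw [ha, hb]; ring
        rcases Int.even_or_odd (f : ℤ) with ⟨t, ht⟩ | hfo
        · have hft : (f : ℤ) ^ 2 = 4 * t ^ 2 := by rw [ht]; ring
          have lin : 4 * t ^ 2 =
              (8 * j1 + 1) + (8 * (8 * a * b + a + b) + 1) + (8 * j2 + 1) := by
            rw [← hj1, ← hj2, ← hw, ← hft]; exact heq
          generalize t ^ 2 = T at lin
          generalize 8 * a * b + a + b = W at lin
          omega
        · obtain ⟨γ, hγ⟩ := odd_sq' (Int.odd_iff.mp hfo)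
          have lin : 8 * γ + 1 =
              (8 * j1 + 1) + (8 * (8 * a * b + a + b) + 1) + (8 * j2 + 1) := by
            rw [← hj1, ← hj2, ← hw, ← hγ]; exact heq
          generalize 8 * a * b + a + b = W at lin
          omega
    rcases hpar with ⟨h1, h2⟩ | ⟨h1, h2⟩
    · obtain ⟨C, S, T, hlt, hgcd, hEq, hST⟩ := core f m n hco h1 h2 hn0 heq
      exact hST (IH C hlt S T hgcd hEq)
    · have heq' : (f : ℤ) ^ 2 = n ^ 4 + n ^ 2 * m ^ 2 + m ^ 4 := by linear_combination heq
      have hco' : Int.gcd n m = 1 := by rwa [Int.gcd_comm]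
      obtain ⟨C, S, T, hlt, hgcd, hEq, hST⟩ := core f n m hco' h2 h1 hm0 heq'
      exact hST (IH C hlt S T hgcd hEq)

private lemma int_version (a b c : ℤ) (hco : Int.gcd a b = 1) (hb : b ≠ 0)
    (h : c ^ 2 = (b ^ 2 - a ^ 2) * (3 * b ^ 2 + a ^ 2)) : a ^ 2 = b ^ 2 := by
  have hcoI : IsCoprime a b := Int.isCoprime_iff_gcd_eq_one.mpr hco
  rcases Int.emod_two_eq a with ha2 | ha2 <;> rcases Int.emod_two_eq b with hb2 | hb2
  · exact absurd (hcoI.isUnit_of_dvd' (Int.dvd_of_emod_eq_zero ha2)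
      (Int.dvd_of_emod_eq_zero hb2)) not_isunit_two
  · -- a even, b odd : impossible
    exfalso
    obtain ⟨a₀, rfl⟩ : ∃ a₀, a = 2 * a₀ := ⟨a / 2, by omega⟩
    obtain ⟨β, hβ⟩ := odd_sq' hb2
    have hA : b ^ 2 - (2 * a₀) ^ 2 = 4 * (2 * β - a₀ ^ 2) + 1 := by rw [hβ]; ring
    have hB : 3 * b ^ 2 + (2 * a₀) ^ 2 = 4 * (6 * β + a₀ ^ 2) + 3 := by rw [hβ]; ring
    rw [hA, hB] at h
    generalize hx : 2 * β - a₀ ^ 2 = x at h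
    generalize hy : 6 * β + a₀ ^ 2 = y at h
    have lin : c ^ 2 = 16 * (x * y) + 12 * x + 4 * y + 3 := by rw [h]; ring
    rcases Int.even_or_odd c with ⟨t, ht⟩ | hco'
    · have hct : c ^ 2 = 4 * t ^ 2 := by rw [ht]; ring
      rw [hct] at lin
      generalize t ^ 2 = T at lin
      generalize x * y = W at lin
      omega
    · obtain ⟨γ, hγ⟩ := odd_sq' (Int.odd_iff.mp hco')
      rw [hγ] at lin
      generalize x * y = W at lin
      omega
  · -- a odd, b even : impossible
    exfalso
    obtain ⟨b₀, rfl⟩ : ∃ b₀, b = 2 * b₀ := ⟨b / 2, by omega⟩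
    obtain ⟨α, hα⟩ := odd_sq' ha2
    have hA : (2 * b₀) ^ 2 - a ^ 2 = 4 * (b₀ ^ 2 - 2 * α - 1) + 3 := by rw [hα]; ring
    have hB : 3 * (2 * b₀) ^ 2 + a ^ 2 = 4 * (3 * b₀ ^ 2 + 2 * α) + 1 := by rw [hα]; ring
    rw [hA, hB] at h
    generalize hx : b₀ ^ 2 - 2 * α - 1 = x at h
    generalize hy : 3 * b₀ ^ 2 + 2 * α = y at h
    have lin : c ^ 2 = 16 * (x * y) + 4 * x + 12 * y + 3 := by rw [h]; ring
    rcases Int.even_or_odd c with ⟨t, ht⟩ | hco'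
    · have hct : c ^ 2 = 4 * t ^ 2 := by rw [ht]; ring
      rw [hct] at lin
      generalize t ^ 2 = T at lin
      generalize x * y = W at lin
      omega
    · obtain ⟨γ, hγ⟩ := odd_sq' (Int.odd_iff.mp hco')
      rw [hγ] at lin
      generalize x * y = W at lin
      omega
  · -- both odd
    have h3pos : 0 < 3 * b ^ 2 + a ^ 2 := by positivity
    have hge : 0 ≤ b ^ 2 - a ^ 2 := by
      by_contra hcon
      push_neg at hcon
      have hneg : (b ^ 2 - a ^ 2) * (3 * b ^ 2 + a ^ 2) < 0 :=
        mul_neg_of_neg_of_pos (by linarith) h3pos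
      rw [← h] at hneg
      linarith [sq_nonneg c]
    by_cases hab : a ^ 2 = b ^ 2
    · exact hab
    exfalso
    have hgt : 0 < b ^ 2 - a ^ 2 := by
      rcases hge.lt_or_eq with h' | h'
      · exact h'
      · exact absurd (by linarith : a ^ 2 = b ^ 2) hab
    obtain ⟨α, hα⟩ := odd_sq' ha2
    obtain ⟨β, hβ⟩ := odd_sq' hb2
    have hQ1 : b ^ 2 - a ^ 2 = 4 * (2 * (β - α)) := by rw [hα, hβ]; ring
    have hQ2 : 3 * b ^ 2 + a ^ 2 = 4 * (6 * β + 2 * α + 1) := by rw [hα, hβ]; ring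
    have hQ1pos : 0 < 2 * (β - α) := by linarith
    have hQ2pos : 0 < 6 * β + 2 * α + 1 := by linarith
    have h16 : c ^ 2 = 16 * ((2 * (β - α)) * (6 * β + 2 * α + 1)) := by
      rw [h, hQ1, hQ2]; ring
    obtain ⟨c1, rfl⟩ : ∃ c1, c = 4 * c1 := by
      rcases Int.even_or_odd c with ⟨t, rfl⟩ | hodd
      · rcases Int.even_or_odd t with ⟨u, rfl⟩ | ⟨u, rfl⟩
        · exact ⟨u, by ring⟩
        · exfalso
          have hct : (2 * u + 1 + (2 * u + 1)) ^ 2 = 4 * ((2 * u + 1) ^ 2) := by ring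
          obtain ⟨κ, hκ⟩ := odd_sq' (show (2 * u + 1) % 2 = 1 by omega)
          rw [hct, hκ] at h16
          generalize (2 * (β - α)) * (6 * β + 2 * α + 1) = W at h16
          omega
      · exfalso
        obtain ⟨γ, hγ⟩ := odd_sq' (Int.odd_iff.mp hodd)
        rw [hγ] at h16
        generalize (2 * (β - α)) * (6 * β + 2 * α + 1) = W at h16
        omega
    have hc1sq : c1 ^ 2 = (2 * (β - α)) * (6 * β + 2 * α + 1) := by
      have h16' : 16 * (c1 ^ 2) = 16 * ((2 * (β - α)) * (6 * β + 2 * α + 1)) := by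
        linear_combination h16
      exact mul_left_cancel₀ (by norm_num) h16'
    have hQsum : (2 * (β - α)) + (6 * β + 2 * α + 1) = b ^ 2 := by rw [hβ]; ring
    have hcoQ : IsCoprime (2 * (β - α)) (6 * β + 2 * α + 1) := by
      apply coprime_of_prime'
      intro p pp hp1 hp2
      have hpb : p ∣ b := by
        apply pp.dvd_of_dvd_pow (n := 2)
        rw [← hQsum]; exact dvd_add hp1 hp2
      have hpa : p ∣ a := by
        apply pp.dvd_of_dvd_pow (n := 2)
        have ha2eq : a ^ 2 = 4 * (6 * β + 2 * α + 1) - 3 * b ^ 2 := by linarith [hQ2]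
        rw [ha2eq]
        obtain ⟨r, hr⟩ := hpb
        exact dvd_sub (hp2.mul_left 4) ⟨3 * r * b, by rw [hr]; ring⟩
      exact pp.not_unit (hcoI.isUnit_of_dvd' hpa hpb)
    obtain ⟨e, hepos, he⟩ := sq_split hcoQ hc1sq.symm hQ1pos
    obtain ⟨g, hgpos, hg⟩ := sq_split hcoQ.symm (by rw [mul_comm]; exact hc1sq.symm) hQ2pos
    -- Pythagorean triple (a, 2e, |b|)
    have hb2e : b ^ 2 - a ^ 2 = 4 * e ^ 2 := by rw [hQ1, he]
    have habs : |b| * |b| = b * b := abs_mul_abs_self b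
    have hpy : PythagoreanTriple a (2 * e) |b| := by
      show a * a + (2 * e) * (2 * e) = |b| * |b|
      rw [habs]; linear_combination - hb2e
    have hgcd2 : Int.gcd a (2 * e) = 1 := by
      rw [← Int.isCoprime_iff_gcd_eq_one]
      apply coprime_of_prime'
      intro p pp hpa hp2e
      rcases pp.dvd_mul.mp hp2e with hp2 | hpe
      · have pnat : Nat.Prime p.natAbs := Int.prime_iff_natAbs_prime.mp pp
        have hp2' : p.natAbs ∣ 2 := by
          rw [← Int.natAbs_natCast 2]; exact Int.natAbs_dvd_natAbs.mpr hp2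
        have hpn : p.natAbs = 2 := by
          rcases (Nat.prime_two).eq_one_or_self_of_dvd p.natAbs hp2' with h' | h'
          · exact absurd h' pnat.ne_one
          · exact h'
        have h2a : (2 : ℤ) ∣ a := by
          have hh := Int.natAbs_dvd.mpr hpa; rw [hpn] at hh; exact_mod_cast hh
        obtain ⟨r, hr⟩ := h2a
        omega
      · have hpb : p ∣ b := by
          apply pp.dvd_of_dvd_pow (n := 2)
          have hbeq : b ^ 2 = a ^ 2 + 4 * e ^ 2 := by linarith
          rw [hbeq]
          obtain ⟨r, hr⟩ := hpa
          obtain ⟨w, hw⟩ := hpe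
          exact dvd_add ⟨r * a, by rw [hr]; ring⟩ ⟨4 * w * e, by rw [hw]; ring⟩
        exact pp.not_unit (hcoI.isUnit_of_dvd' hpa hpb)
    have hbabs : 0 < |b| := abs_pos.mpr hb
    obtain ⟨m, n, ham, h2e, hbm, hcomn, hparmn, hmnn⟩ :=
      PythagoreanTriple.coprime_classification' hpy hgcd2 ha2 hbabs
    have hemn : e = m * n := by linarith
    have hgeq : g ^ 2 = m ^ 4 + m ^ 2 * n ^ 2 + n ^ 4 := by
      have hb2 : b ^ 2 = (m ^ 2 + n ^ 2) ^ 2 := by rw [← sq_abs b, hbm]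
      have he2 : e ^ 2 = m ^ 2 * n ^ 2 := by rw [hemn]; ring
      have s1 : g ^ 2 = b ^ 2 - e ^ 2 := by linear_combination hQsum - he - hg
      linear_combination s1 + hb2 - he2
    have hgnat : ((g.natAbs : ℤ)) = g := Int.natAbs_of_nonneg hgpos.le
    have hmn0 := descent g.natAbs m n hcomn (by rw [hgnat]; exact hgeq)
    have he0 : e = 0 := by rw [hemn, hmn0]
    rw [he0] at hb2e
    simp at hb2e
    linarith

/-- the only rational points on the quartic `v² = −u⁴ − 2u² + 3`
are `(±1, 0)`. -/
theorem rational_points_quartic (u v : ℚ)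
    (h : v ^ 2 = -u ^ 4 - 2 * u ^ 2 + 3) :
    v = 0 ∧ u ^ 2 = 1 := by
  set a : ℤ := u.num with ha
  set b : ℤ := (u.den : ℤ) with hbdef
  have hbne : b ≠ 0 := by
    rw [hbdef]; exact_mod_cast u.den_pos.ne'
  have hb0 : (b : ℚ) ≠ 0 := by exact_mod_cast hbne
  have hu : (a : ℚ) = u * (b : ℚ) := by
    have h1 := Rat.num_div_den u
    rw [ha, hbdef]
    push_cast
    rw [div_eq_iff (by exact_mod_cast u.den_pos.ne' : ((u.den : ℚ)) ≠ 0)] at h1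
    exact h1
  have hq2 : (v * (b : ℚ) ^ 2) ^ 2 = ((3 * b ^ 4 - 2 * a ^ 2 * b ^ 2 - a ^ 4 : ℤ) : ℚ) := by
    push_cast
    rw [hu]
    linear_combination ((b : ℚ)) ^ 4 * h
  have hden : (v * (b : ℚ) ^ 2).den = 1 := by
    have h1 : ((v * (b : ℚ) ^ 2) ^ 2).den = 1 := by rw [hq2]; exact Rat.den_intCast _
    have h2 : ((v * (b : ℚ) ^ 2) ^ 2).den = (v * (b : ℚ) ^ 2).den ^ 2 := Rat.den_pow _ 2
    have h3 : (v * (b : ℚ) ^ 2).den ^ 2 = 1 := by rw [← h2, h1]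
    rw [pow_two] at h3
    exact Nat.dvd_one.mp ⟨(v * (b : ℚ) ^ 2).den, h3.symm⟩
  set c : ℤ := (v * (b : ℚ) ^ 2).num with hc
  have hcq : ((c : ℚ)) = v * (b : ℚ) ^ 2 := by
    rw [hc]; exact Rat.coe_int_num_of_den_eq_one hden
  have hcK : c ^ 2 = 3 * b ^ 4 - 2 * a ^ 2 * b ^ 2 - a ^ 4 := by
    have : ((c : ℚ)) ^ 2 = ((3 * b ^ 4 - 2 * a ^ 2 * b ^ 2 - a ^ 4 : ℤ) : ℚ) := by
      rw [hcq]; exact hq2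
    exact_mod_cast this
  have hgcd : Int.gcd a b = 1 := by
    have := u.reduced
    rw [ha, hbdef]
    unfold Int.gcd
    simpa using this
  have hK : c ^ 2 = (b ^ 2 - a ^ 2) * (3 * b ^ 2 + a ^ 2) := by rw [hcK]; ring
  have hab := int_version a b c hgcd hbne hK
  have hu2 : u ^ 2 = 1 := by
    have habQ : ((a : ℚ)) ^ 2 = ((b : ℚ)) ^ 2 := by exact_mod_cast congrArg (Int.cast : ℤ → ℚ) hab
    have h5 : u ^ 2 * (b : ℚ) ^ 2 = 1 * (b : ℚ) ^ 2 := by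
      rw [one_mul]
      linear_combination habQ - (u * (b : ℚ) + (a : ℚ)) * hu
    exact mul_right_cancel₀ (pow_ne_zero 2 hb0) h5
  refine ⟨?_, hu2⟩
  have hv2 : v ^ 2 = 0 := by linear_combination h - (u ^ 2 + 3) * hu2
  exact sq_eq_zero_iff.mp hv2
end
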